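/- arXiv:1302.3726 — 7 statements merged into one kernel-verified Lean document; each statement's English description precedes it below -/
import Mathlib

section
/- For any integers $k, z$ with $0 < z < k$, we have $((k-z)/k)^{k-z} > 4^{-z}$. -/
theorem stmt1 (k z : ℤ) (h0 : 0 < z) (h1 : z < k) :
    (4 : ℚ) ^ (-z) < ((k - z : ℚ) / (k : ℚ)) ^ (k - z) := by
  have key : (4 : ℝ) ^ (-z) < (((k : ℝ) - z) / k) ^ (k - z) := by
    have hk : (0 : ℝ) < k := by exact_mod_cast h0.trans h1
    have hkz : (0 : ℝ) < (k : ℝ) - z := by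
      have h := sub_pos.mpr h1
      have : ((0:ℤ):ℝ) < ((k - z : ℤ) : ℝ) := by exact_mod_cast h
      push_cast at this; linarith
    set a : ℝ := ((k : ℝ) - z) / k with ha_def
    have ha : 0 < a := div_pos hkz hk
    have hlhs : (0:ℝ) < (4:ℝ) ^ (-z) := zpow_pos (by norm_num) _
    have hrhs : (0:ℝ) < a ^ (k - z) := zpow_pos ha _
    rw [← Real.log_lt_log_iff hlhs hrhs, Real.log_zpow, Real.log_zpow]
    -- log (1/a) < 1/a - 1 = z/(k-z)
    have hinv : Real.log a⁻¹ < z / ((k:ℝ) - z) := by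
      have ha1 : a < 1 := by
        rw [ha_def, div_lt_one hk]
        have : (0:ℝ) < z := by exact_mod_cast h0
        linarith
      have h1a : a⁻¹ ≠ 1 := fun h => absurd (inv_eq_one.mp h) (ne_of_lt ha1)
      have hlt := Real.log_lt_sub_one_of_pos (inv_pos.mpr ha) h1a
      have hainv : a⁻¹ = (k:ℝ) / ((k:ℝ) - z) := by
        rw [ha_def, inv_div]
      have heq : a⁻¹ - 1 = z / ((k:ℝ) - z) := by
        rw [hainv]; field_simp; ring
      linarith [hlt, heq.symm.le, heq.le]
    have hloga : -(z : ℝ) / ((k:ℝ) - z) < Real.log a := by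
      rw [Real.log_inv] at hinv
      have := neg_lt_neg hinv
      simp at this ⊢
      rw [neg_div] at *
      linarith
    have hmul : -(z:ℝ) < ((k:ℝ) - z) * Real.log a := by
      have := (div_lt_iff₀ hkz).mp hloga
      linarith [this]
    have hlog4 : (1:ℝ) < Real.log 4 := by
      calc (1:ℝ) = Real.log (Real.exp 1) := (Real.log_exp 1).symm
        _ < Real.log 4 := Real.log_lt_log (Real.exp_pos 1) (by
            have := Real.exp_one_lt_d9; linarith)
    have hz : (0:ℝ) < z := by exact_mod_cast h0
    have : ((-z : ℤ) : ℝ) * Real.log 4 < -(z:ℝ) := by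
      push_cast
      nlinarith
    calc ((-z : ℤ) : ℝ) * Real.log 4 < -(z:ℝ) := this
      _ < ((k:ℝ) - z) * Real.log a := hmul
      _ = ((k - z : ℤ) : ℝ) * Real.log a := by push_cast; ring
  rw [← Rat.cast_lt (K := ℝ)]
  push_cast
  exact key
end

section
/- Let $U$ be a finite set of size $n$, let $g_1, g_2 : \mathcal{P}(U) \to \mathbb{R}$, and for disjoint-sized parameters define $s_{A,u}(g) = \sum_{B \subseteq U,\ |B| = u,\ A \cap B = \emptyset} \hat{g}_{A \cup B}$ and $s_{B,u_1,u_2}(g_1,g_2) = \sum_{B_1, C \subseteq U,\ |B_1|=u_1,\ |C|=u_2,\ B \cap B_1 = B \cap C = B_1 \cap C = \emptyset} \hat{g_1}_{B \cup B_1}\hat{g_2}_{B \cup C}$. Then for all $A \subseteq U$ and all $u_1, u_2 \ge 0$: $s_{A,u_1}(g_1)\, s_{A,u_2}(g_2) = \sum_{u \ge 0} \sum_{A \subseteq B \subseteq U,\ |B| = |A| + u} s_{B,\,u_1-u,\,u_2-u}(g_1,g_2)$. -/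
open Finset

noncomputable def eV {U : Type*} [DecidableEq U] (S C : Finset U) : ℝ :=
  (-1) ^ (S ∩ C).card

noncomputable def ip {U : Type*} [Fintype U] [DecidableEq U] (f g : Finset U → ℝ) : ℝ :=
  ((2 : ℝ) ^ Fintype.card U)⁻¹ * ∑ C : Finset U, f C * g C

/-- The Fourier coefficient `ĝ_V = g ⬝ e_V`. -/
noncomputable def hatC {U : Type*} [Fintype U] [DecidableEq U] (g : Finset U → ℝ)
    (S : Finset U) : ℝ :=
  ip g (eV S)

/-- `s_{A,u}(g) = ∑_{B : |B| = u, A ∩ B = ∅} ĝ_{A ∪ B}`. -/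
noncomputable def sA {U : Type*} [Fintype U] [DecidableEq U] (g : Finset U → ℝ)
    (A : Finset U) (u : ℕ) : ℝ :=
  ∑ B ∈ univ.filter (fun B : Finset U => B.card = u ∧ Disjoint A B), hatC g (A ∪ B)

/-- `s_{B,u₁,u₂}(g₁,g₂) = ∑_{B₁,C pairwise disjoint from B and each other,
|B₁| = u₁, |C| = u₂} ĝ₁_{B ∪ B₁} ĝ₂_{B ∪ C}`. -/
noncomputable def sSet {U : Type*} [Fintype U] [DecidableEq U] (g₁ g₂ : Finset U → ℝ)
    (B : Finset U) (u₁ u₂ : ℕ) : ℝ :=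
  ∑ B₁ : Finset U, ∑ C : Finset U,
    if B₁.card = u₁ ∧ C.card = u₂ ∧ Disjoint B B₁ ∧ Disjoint B C ∧ Disjoint B₁ C then
      hatC g₁ (B ∪ B₁) * hatC g₂ (B ∪ C)
    else 0

/-- `s_{A,u₁}(g₁) s_{A,u₂}(g₂) = ∑_{u ≥ 0} ∑_{A ⊆ B, |B| = |A| + u} s_{B,u₁-u,u₂-u}(g₁,g₂)`
(terms with a negative index vanish, so the sum over `u` runs up to `min u₁ u₂`). -/
theorem stmt9 {U : Type*} [Fintype U] [DecidableEq U] (g₁ g₂ : Finset U → ℝ)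
    (A : Finset U) (u₁ u₂ : ℕ) :
    sA g₁ A u₁ * sA g₂ A u₂ =
      ∑ u ∈ Finset.range (min u₁ u₂ + 1),
        ∑ B ∈ univ.filter (fun B : Finset U => A ⊆ B ∧ B.card = A.card + u),
          sSet g₁ g₂ B (u₁ - u) (u₂ - u) := by
  classical
  -- flatten sSet
  have hsSet : ∀ (B : Finset U) (v₁ v₂ : ℕ), sSet g₁ g₂ B v₁ v₂ =
      ∑ p ∈ ((univ ×ˢ univ : Finset (Finset U × Finset U)).filter
        (fun p => p.1.card = v₁ ∧ p.2.card = v₂ ∧ Disjoint B p.1 ∧ Disjoint B p.2 ∧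
          Disjoint p.1 p.2)),
        hatC g₁ (B ∪ p.1) * hatC g₂ (B ∪ p.2) := by
    intro B v₁ v₂
    rw [Finset.sum_filter, Finset.sum_product, sSet]
  -- flatten each inner sum of the RHS
  have hR : ∀ u : ℕ,
      (∑ B ∈ univ.filter (fun B : Finset U => A ⊆ B ∧ B.card = A.card + u),
        sSet g₁ g₂ B (u₁ - u) (u₂ - u)) =
      ∑ r ∈ ((univ ×ˢ (univ ×ˢ univ)) :
          Finset (Finset U × Finset U × Finset U)).filter
        (fun r => (A ⊆ r.1 ∧ r.1.card = A.card + u) ∧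
          (r.2.1.card = u₁ - u ∧ r.2.2.card = u₂ - u ∧ Disjoint r.1 r.2.1 ∧
            Disjoint r.1 r.2.2 ∧ Disjoint r.2.1 r.2.2)),
        hatC g₁ (r.1 ∪ r.2.1) * hatC g₂ (r.1 ∪ r.2.2) := by
    intro u
    rw [Finset.sum_filter, Finset.sum_filter, Finset.sum_product]
    refine Finset.sum_congr rfl fun B _ => ?_
    by_cases h : A ⊆ B ∧ B.card = A.card + u
    · simp only [h, if_true, true_and]
      rw [hsSet, Finset.sum_filter, Finset.sum_product]
    · simp [h]
  simp only [hR]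
  -- combine the RHS into a single filtered sum over quadruples
  have hQ : (∑ u ∈ Finset.range (min u₁ u₂ + 1),
      ∑ r ∈ ((univ ×ˢ (univ ×ˢ univ)) :
          Finset (Finset U × Finset U × Finset U)).filter
        (fun r => (A ⊆ r.1 ∧ r.1.card = A.card + u) ∧
          (r.2.1.card = u₁ - u ∧ r.2.2.card = u₂ - u ∧ Disjoint r.1 r.2.1 ∧
            Disjoint r.1 r.2.2 ∧ Disjoint r.2.1 r.2.2)),
        hatC g₁ (r.1 ∪ r.2.1) * hatC g₂ (r.1 ∪ r.2.2)) =
      ∑ q ∈ ((Finset.range (min u₁ u₂ + 1) ×ˢ (univ ×ˢ (univ ×ˢ univ))) :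
          Finset (ℕ × Finset U × Finset U × Finset U)).filter
        (fun q => (A ⊆ q.2.1 ∧ q.2.1.card = A.card + q.1) ∧
          (q.2.2.1.card = u₁ - q.1 ∧ q.2.2.2.card = u₂ - q.1 ∧ Disjoint q.2.1 q.2.2.1 ∧
            Disjoint q.2.1 q.2.2.2 ∧ Disjoint q.2.2.1 q.2.2.2)),
        hatC g₁ (q.2.1 ∪ q.2.2.1) * hatC g₂ (q.2.1 ∪ q.2.2.2) := by
    rw [Finset.sum_filter (s := Finset.range (min u₁ u₂ + 1) ×ˢ (univ ×ˢ (univ ×ˢ univ))),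
      Finset.sum_product]
    exact Finset.sum_congr rfl fun u _ => (Finset.sum_filter _ _)
  rw [hQ]
  -- flatten the LHS
  rw [sA, sA, Finset.sum_mul_sum, ← Finset.sum_product', ← Finset.filter_product]
  -- the bijection
  refine Finset.sum_nbij'
    (fun p : Finset U × Finset U =>
      ((p.1 ∩ p.2).card, A ∪ (p.1 ∩ p.2), p.1 \ p.2, p.2 \ p.1))
    (fun q : ℕ × Finset U × Finset U × Finset U =>
      ((q.2.1 \ A) ∪ q.2.2.1, (q.2.1 \ A) ∪ q.2.2.2))
    ?_ ?_ ?_ ?_ ?_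
  · rintro ⟨B₁, B₂⟩ hp
    simp only [Finset.mem_filter, Finset.mem_product, Finset.mem_univ, true_and] at hp
    obtain ⟨⟨h1, h2⟩, h3, h4⟩ := hp
    have hD : Disjoint A (B₁ ∩ B₂) := h2.mono_right inter_subset_left
    simp only [Finset.mem_filter, Finset.mem_product, Finset.mem_univ, true_and,
      Finset.mem_range]
    refine ⟨?_, ⟨subset_union_left, ?_⟩, ?_, ?_, ?_, ?_, ?_⟩
    · have hle1 : (B₁ ∩ B₂).card ≤ u₁ := h1 ▸ Finset.card_le_card inter_subset_left
      have hle2 : (B₁ ∩ B₂).card ≤ u₂ := h3 ▸ Finset.card_le_card inter_subset_right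
      exact ⟨Nat.lt_succ_of_le (le_min hle1 hle2), trivial⟩
    · rw [Finset.card_union_of_disjoint hD]
    · rw [← Finset.sdiff_inter_self_left, Finset.card_sdiff_of_subset inter_subset_left, h1]
    · rw [← Finset.sdiff_inter_self_left, Finset.card_sdiff_of_subset inter_subset_left, h3,
        Finset.inter_comm]
    · exact Finset.disjoint_union_left.mpr
        ⟨h2.mono_right sdiff_subset, Finset.disjoint_sdiff.mono_left inter_subset_right⟩
    · exact Finset.disjoint_union_left.mpr
        ⟨h4.mono_right sdiff_subset, Finset.disjoint_sdiff.mono_left inter_subset_left⟩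
    · exact disjoint_sdiff_sdiff
  · rintro ⟨u, B, B₁, C⟩ hq
    simp only [Finset.mem_filter, Finset.mem_product, Finset.mem_univ, true_and,
      Finset.mem_range] at hq
    obtain ⟨hu, ⟨hAB, hcB⟩, hc1, hc2, hd1, hd2, hd3⟩ := hq
    simp only [Finset.mem_filter, Finset.mem_product, Finset.mem_univ, true_and]
    have hdisj1 : Disjoint (B \ A) B₁ := hd1.mono_left sdiff_subset
    have hdisj2 : Disjoint (B \ A) C := hd2.mono_left sdiff_subset
    have hcard : (B \ A).card = u := by rw [Finset.card_sdiff_of_subset hAB]; omega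
    refine ⟨⟨?_, ?_⟩, ?_, ?_⟩
    · rw [Finset.card_union_of_disjoint hdisj1, hcard, hc1]; omega
    · exact Finset.disjoint_union_right.mpr ⟨Finset.disjoint_sdiff, hd1.mono_left hAB⟩
    · rw [Finset.card_union_of_disjoint hdisj2, hcard, hc2]; omega
    · exact Finset.disjoint_union_right.mpr ⟨Finset.disjoint_sdiff, hd2.mono_left hAB⟩
  · rintro ⟨B₁, B₂⟩ hp
    simp only [Finset.mem_filter, Finset.mem_product, Finset.mem_univ, true_and] at hp
    obtain ⟨⟨h1, h2⟩, h3, h4⟩ := hp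
    have e1 : (A ∪ B₁ ∩ B₂) \ A = B₁ ∩ B₂ :=
      Finset.union_sdiff_cancel_left (h2.mono_right inter_subset_left)
    have hA1 := Finset.disjoint_left.mp h2
    have hA2 := Finset.disjoint_left.mp h4
    simp only [e1, Prod.mk.injEq]
    constructor
    · ext x
      simp only [Finset.mem_union, Finset.mem_inter, Finset.mem_sdiff]
      tauto
    · ext x
      simp only [Finset.mem_union, Finset.mem_inter, Finset.mem_sdiff]
      tauto
  · rintro ⟨u, B, B₁, C⟩ hq
    simp only [Finset.mem_filter, Finset.mem_product, Finset.mem_univ, true_and,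
      Finset.mem_range] at hq
    obtain ⟨hu, ⟨hAB, hcB⟩, hc1, hc2, hd1, hd2, hd3⟩ := hq
    have hB1 := Finset.disjoint_left.mp hd1
    have hB2 := Finset.disjoint_left.mp hd2
    have hB3 := Finset.disjoint_left.mp hd3
    have eInter : ((B \ A) ∪ B₁) ∩ ((B \ A) ∪ C) = B \ A := by
      ext x
      simp only [Finset.mem_union, Finset.mem_inter, Finset.mem_sdiff]
      constructor
      · rintro ⟨h | h, h' | h'⟩ <;>
          first
          | exact h
          | exact h'
          | (exact absurd h' (hB3 h))
      · intro h; exact ⟨Or.inl h, Or.inl h⟩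
    have eL : ((B \ A) ∪ B₁) \ ((B \ A) ∪ C) = B₁ := by
      ext x
      simp only [Finset.mem_union, Finset.mem_sdiff, not_or, Finset.mem_sdiff]
      constructor
      · rintro ⟨h | h, h'⟩
        · exact absurd h h'.1
        · exact h
      · intro h
        exact ⟨Or.inr h, fun h' => (hB1 h'.1) h, fun h' => (hB3 h) h'⟩
    have eR : ((B \ A) ∪ C) \ ((B \ A) ∪ B₁) = C := by
      ext x
      simp only [Finset.mem_union, Finset.mem_sdiff, not_or, Finset.mem_sdiff]
      constructor
      · rintro ⟨h | h, h'⟩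
        · exact absurd h h'.1
        · exact h
      · intro h
        exact ⟨Or.inr h, fun h' => (hB2 h'.1) h, fun h' => (hB3 h') h⟩
    have hcard : (B \ A).card = u := by rw [Finset.card_sdiff_of_subset hAB]; omega
    have eB : A ∪ (B \ A) = B := Finset.union_sdiff_of_subset hAB
    simp only [eInter, eL, eR, eB, hcard, Prod.mk.injEq]
  · rintro ⟨B₁, B₂⟩ hp
    simp only [Finset.mem_filter, Finset.mem_product, Finset.mem_univ, true_and] at hp
    obtain ⟨⟨h1, h2⟩, h3, h4⟩ := hp
    have e1 : A ∪ B₁ ∩ B₂ ∪ B₁ \ B₂ = A ∪ B₁ := by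
      ext x
      simp only [Finset.mem_union, Finset.mem_inter, Finset.mem_sdiff]
      by_cases hx : x ∈ B₂ <;> tauto
    have e2 : A ∪ B₁ ∩ B₂ ∪ B₂ \ B₁ = A ∪ B₂ := by
      ext x
      simp only [Finset.mem_union, Finset.mem_inter, Finset.mem_sdiff]
      by_cases hx : x ∈ B₁ <;> tauto
    simp only [e1, e2]
end

section
/- With the notation $s_{k,u_1,u_2}(g_1,g_2) = \sum_{A,B,C \subseteq U,\ |A|=k,\ |B|=u_1,\ |C|=u_2,\ A,B,C\ \text{pairwise disjoint}} \hat{g_1}_{A\cup B}\hat{g_2}_{A\cup C}$ and $s_{A,u}(g) = \sum_{B \subseteq U,\ |B|=u,\ A\cap B=\emptyset} \hat{g}_{A\cup B}$, summing the single-set product identity over all $A$ of size $k$ yields: $\sum_{A : |A|=k} s_{A,u_1}(g_1) s_{A,u_2}(g_2) = \sum_{u \ge 0} \binom{k+u}{u} s_{k+u,\,u_1-u,\,u_2-u}(g_1,g_2)$. -/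
open Finset

/-- `s_{k,u₁,u₂}(g₁,g₂) = ∑_{A : |A| = k} s_{A,u₁,u₂}(g₁,g₂)`. -/
noncomputable def sK {U : Type*} [Fintype U] [DecidableEq U] (g₁ g₂ : Finset U → ℝ)
    (k u₁ u₂ : ℕ) : ℝ :=
  ∑ A ∈ univ.filter (fun A : Finset U => A.card = k), sSet g₁ g₂ A u₁ u₂

section Aux
variable {U : Type*} [Fintype U] [DecidableEq U]

lemma lhs_red (g₁ g₂ : Finset U → ℝ) (k u₁ u₂ : ℕ) :
    ∑ A ∈ univ.filter (fun A : Finset U => A.card = k), sA g₁ A u₁ * sA g₂ A u₂ =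
    ∑ A : Finset U, ∑ B : Finset U, ∑ C : Finset U,
      if A.card = k ∧ B.card = u₁ ∧ C.card = u₂ ∧ Disjoint A B ∧ Disjoint A C then
        hatC g₁ (A ∪ B) * hatC g₂ (A ∪ C) else 0 := by
  rw [Finset.sum_filter]
  refine Finset.sum_congr rfl fun A _ => ?_
  by_cases hA : A.card = k
  · simp only [hA, if_true, true_and]
    rw [sA, sA, Finset.sum_mul_sum, Finset.sum_filter]
    refine Finset.sum_congr rfl fun B _ => ?_
    rw [Finset.sum_filter]
    by_cases hB : B.card = u₁ ∧ Disjoint A B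
    · rw [if_pos hB]
      refine Finset.sum_congr rfl fun C _ => ?_
      by_cases hC : C.card = u₂ ∧ Disjoint A C
      · rw [if_pos hC, if_pos ⟨hB.1, hC.1, hB.2, hC.2⟩]
      · rw [if_neg hC, if_neg (by tauto)]
    · rw [if_neg hB]
      refine (Finset.sum_eq_zero fun C _ => ?_).symm
      rw [if_neg (by tauto)]
  · rw [if_neg hA]
    refine (Finset.sum_eq_zero fun B _ => Finset.sum_eq_zero fun C _ => ?_).symm
    rw [if_neg (by tauto)]

lemma collapse (k u₁ u₂ cA cB cC cD : ℕ) (P : Prop) [Decidable P] (t : ℝ) :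
    (∑ u ∈ Finset.range (min u₁ u₂ + 1),
       if cA = k + u ∧ cD = u ∧ cB = u₁ - u ∧ cC = u₂ - u ∧ P then t else 0)
    = if cA = k + cD ∧ cB + cD = u₁ ∧ cC + cD = u₂ ∧ P then t else 0 := by
  by_cases hP : P
  · by_cases h : cA = k + cD ∧ cB + cD = u₁ ∧ cC + cD = u₂
    · rw [if_pos ⟨h.1, h.2.1, h.2.2, hP⟩]
      rw [Finset.sum_eq_single cD]
      · rw [if_pos ⟨h.1, rfl, by omega, by omega, hP⟩]
      · intro u _ hu
        rw [if_neg]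
        rintro ⟨-, h2, -⟩
        exact hu h2.symm
      · intro habs
        exact absurd (Finset.mem_range.2 (by omega)) habs
    · rw [if_neg (by tauto)]
      refine Finset.sum_eq_zero fun u hu => ?_
      rw [if_neg]
      rintro ⟨h1, h2, h3, h4, -⟩
      rw [Finset.mem_range] at hu
      exact h ⟨by omega, by omega, by omega⟩
  · simp [hP]

lemma rhs_per_u (g₁ g₂ : Finset U → ℝ) (k u₁ u₂ u : ℕ) :
    ((k + u).choose u : ℝ) * sK g₁ g₂ (k + u) (u₁ - u) (u₂ - u) =
    ∑ A : Finset U, ∑ B : Finset U, ∑ C : Finset U, ∑ D : Finset U,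
      if A.card = k + u ∧ D.card = u ∧ B.card = u₁ - u ∧ C.card = u₂ - u ∧
         (D ⊆ A ∧ Disjoint A B ∧ Disjoint A C ∧ Disjoint B C) then
        hatC g₁ (A ∪ B) * hatC g₂ (A ∪ C) else 0 := by
  rw [sK, Finset.mul_sum, Finset.sum_filter]
  refine Finset.sum_congr rfl fun A _ => ?_
  by_cases hA : A.card = k + u
  · rw [if_pos hA, sSet, Finset.mul_sum]
    refine Finset.sum_congr rfl fun B _ => ?_
    rw [Finset.mul_sum]
    refine Finset.sum_congr rfl fun C _ => ?_
    have hchoose : ((k + u).choose u : ℝ) =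
        ((univ.filter (fun D : Finset U => D.card = u ∧ D ⊆ A)).card : ℕ) := by
      have hps : univ.filter (fun D : Finset U => D.card = u ∧ D ⊆ A) = A.powersetCard u := by
        ext D; simp [Finset.mem_powersetCard]; tauto
      rw [hps, Finset.card_powersetCard, hA]
    by_cases hin : B.card = u₁ - u ∧ C.card = u₂ - u ∧ Disjoint A B ∧ Disjoint A C ∧
        Disjoint B C
    · rw [if_pos hin]
      have : ∀ D : Finset U,
          (if A.card = k + u ∧ D.card = u ∧ B.card = u₁ - u ∧ C.card = u₂ - u ∧
              (D ⊆ A ∧ Disjoint A B ∧ Disjoint A C ∧ Disjoint B C) then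
            hatC g₁ (A ∪ B) * hatC g₂ (A ∪ C) else 0) =
          (if D.card = u ∧ D ⊆ A then hatC g₁ (A ∪ B) * hatC g₂ (A ∪ C) else 0) := by
        intro D
        refine if_congr ?_ rfl rfl
        constructor
        · rintro ⟨-, h2, -, -, h5, -⟩; exact ⟨h2, h5⟩
        · rintro ⟨h2, h5⟩; exact ⟨hA, h2, hin.1, hin.2.1, h5, hin.2.2⟩
      rw [Finset.sum_congr rfl fun D _ => this D, ← Finset.sum_filter,
        Finset.sum_const, nsmul_eq_mul, hchoose]
    · rw [if_neg hin]
      rw [mul_zero]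
      refine (Finset.sum_eq_zero fun D _ => ?_).symm
      rw [if_neg (by tauto)]
  · rw [if_neg hA]
    refine (Finset.sum_eq_zero fun B _ => Finset.sum_eq_zero fun C _ =>
      Finset.sum_eq_zero fun D _ => ?_).symm
    rw [if_neg (by tauto)]

lemma bij (g₁ g₂ : Finset U → ℝ) (k u₁ u₂ : ℕ) :
    (∑ A : Finset U, ∑ B : Finset U, ∑ C : Finset U,
      if A.card = k ∧ B.card = u₁ ∧ C.card = u₂ ∧ Disjoint A B ∧ Disjoint A C then
        hatC g₁ (A ∪ B) * hatC g₂ (A ∪ C) else 0) =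
    ∑ A : Finset U, ∑ B : Finset U, ∑ C : Finset U, ∑ D : Finset U,
      if A.card = k + D.card ∧ B.card + D.card = u₁ ∧ C.card + D.card = u₂ ∧
         (D ⊆ A ∧ Disjoint A B ∧ Disjoint A C ∧ Disjoint B C) then
        hatC g₁ (A ∪ B) * hatC g₂ (A ∪ C) else 0 := by
  have L : (∑ p ∈ (univ.filter (fun p : Finset U × Finset U × Finset U =>
        p.1.card = k ∧ p.2.1.card = u₁ ∧ p.2.2.card = u₂ ∧ Disjoint p.1 p.2.1 ∧
        Disjoint p.1 p.2.2)), hatC g₁ (p.1 ∪ p.2.1) * hatC g₂ (p.1 ∪ p.2.2)) =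
      ∑ A : Finset U, ∑ B : Finset U, ∑ C : Finset U,
        if A.card = k ∧ B.card = u₁ ∧ C.card = u₂ ∧ Disjoint A B ∧ Disjoint A C then
          hatC g₁ (A ∪ B) * hatC g₂ (A ∪ C) else 0 := by
    rw [Finset.sum_filter, Fintype.sum_prod_type]
    exact Finset.sum_congr rfl fun A _ => Fintype.sum_prod_type _
  have R : (∑ q ∈ (univ.filter (fun q : Finset U × Finset U × Finset U × Finset U =>
        q.1.card = k + q.2.2.2.card ∧ q.2.1.card + q.2.2.2.card = u₁ ∧
        q.2.2.1.card + q.2.2.2.card = u₂ ∧ (q.2.2.2 ⊆ q.1 ∧ Disjoint q.1 q.2.1 ∧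
        Disjoint q.1 q.2.2.1 ∧ Disjoint q.2.1 q.2.2.1))),
        hatC g₁ (q.1 ∪ q.2.1) * hatC g₂ (q.1 ∪ q.2.2.1)) =
      ∑ A : Finset U, ∑ B : Finset U, ∑ C : Finset U, ∑ D : Finset U,
        if A.card = k + D.card ∧ B.card + D.card = u₁ ∧ C.card + D.card = u₂ ∧
           (D ⊆ A ∧ Disjoint A B ∧ Disjoint A C ∧ Disjoint B C) then
          hatC g₁ (A ∪ B) * hatC g₂ (A ∪ C) else 0 := by
    rw [Finset.sum_filter, Fintype.sum_prod_type]
    refine Finset.sum_congr rfl fun A _ => ?_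
    rw [Fintype.sum_prod_type]
    exact Finset.sum_congr rfl fun B _ => Fintype.sum_prod_type _
  rw [← L, ← R]
  refine Finset.sum_nbij'
    (i := fun p => (p.1 ∪ (p.2.1 ∩ p.2.2), p.2.1 \ p.2.2, p.2.2 \ p.2.1, p.2.1 ∩ p.2.2))
    (j := fun q => (q.1 \ q.2.2.2, q.2.1 ∪ q.2.2.2, q.2.2.1 ∪ q.2.2.2))
    ?_ ?_ ?_ ?_ ?_
  · rintro ⟨A, B, C⟩ hp
    simp only [Finset.mem_filter, Finset.mem_univ, true_and] at hp ⊢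
    obtain ⟨hk, hB, hC, hAB, hAC⟩ := hp
    have hAD : Disjoint A (B ∩ C) := hAB.mono_right Finset.inter_subset_left
    refine ⟨?_, ?_, ?_, Finset.subset_union_right, ?_, ?_, disjoint_sdiff_sdiff⟩
    · rw [Finset.card_union_of_disjoint hAD, hk]
    · rw [Finset.card_sdiff_add_card_inter, hB]
    · rw [Finset.inter_comm, Finset.card_sdiff_add_card_inter, hC]
    · exact Finset.disjoint_union_left.2
        ⟨hAB.mono_right Finset.sdiff_subset, (Finset.disjoint_sdiff_inter B C).symm⟩
    · refine Finset.disjoint_union_left.2 ⟨hAC.mono_right Finset.sdiff_subset, ?_⟩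
      rw [Finset.inter_comm]
      exact (Finset.disjoint_sdiff_inter C B).symm
  · rintro ⟨A, B, C, D⟩ hq
    simp only [Finset.mem_filter, Finset.mem_univ, true_and] at hq ⊢
    obtain ⟨hk, hB, hC, hsub, hAB, hAC, hBC⟩ := hq
    have hBD : Disjoint B D := hAB.symm.mono_right hsub
    have hCD : Disjoint C D := hAC.symm.mono_right hsub
    refine ⟨?_, ?_, ?_, ?_, ?_⟩
    · rw [Finset.card_sdiff_of_subset hsub]; omega
    · rw [Finset.card_union_of_disjoint hBD]; exact hB
    · rw [Finset.card_union_of_disjoint hCD]; exact hC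
    · exact Finset.disjoint_union_right.2
        ⟨hAB.mono_left Finset.sdiff_subset, Finset.sdiff_disjoint⟩
    · exact Finset.disjoint_union_right.2
        ⟨hAC.mono_left Finset.sdiff_subset, Finset.sdiff_disjoint⟩
  · rintro ⟨A, B, C⟩ hp
    simp only [Finset.mem_filter, Finset.mem_univ, true_and] at hp
    obtain ⟨hk, hB, hC, hAB, hAC⟩ := hp
    dsimp only
    simp only [Prod.mk.injEq]
    refine ⟨?_, ?_, ?_⟩
    · exact Finset.union_sdiff_cancel_right (hAB.mono_right Finset.inter_subset_left)
    · exact Finset.sdiff_union_inter B C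
    · rw [Finset.inter_comm]; exact Finset.sdiff_union_inter C B
  · rintro ⟨A, B, C, D⟩ hq
    simp only [Finset.mem_filter, Finset.mem_univ, true_and] at hq
    obtain ⟨hk, hB, hC, hsub, hAB, hAC, hBC⟩ := hq
    have hBD : Disjoint B D := hAB.symm.mono_right hsub
    have hCD : Disjoint C D := hAC.symm.mono_right hsub
    rw [Finset.disjoint_left] at hBD hCD hBC
    have hD : (B ∪ D) ∩ (C ∪ D) = D := by
      ext a
      simp only [Finset.mem_inter, Finset.mem_union]
      constructor
      · rintro ⟨hb | hd, hc | hd'⟩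
        · exact absurd hc (hBC hb)
        · exact absurd hd' (hBD hb)
        · exact hd
        · exact hd
      · intro h; exact ⟨Or.inr h, Or.inr h⟩
    have hB' : (B ∪ D) \ (C ∪ D) = B := by
      ext a
      simp only [Finset.mem_sdiff, Finset.mem_union, not_or]
      constructor
      · rintro ⟨hb | hd, -, hnd⟩
        · exact hb
        · exact absurd hd hnd
      · intro hb; exact ⟨Or.inl hb, fun hc => hBC hb hc, hBD hb⟩
    have hC' : (C ∪ D) \ (B ∪ D) = C := by
      ext a
      simp only [Finset.mem_sdiff, Finset.mem_union, not_or]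
      constructor
      · rintro ⟨hc | hd, -, hnd⟩
        · exact hc
        · exact absurd hd hnd
      · intro hc; exact ⟨Or.inl hc, fun hb => hBC hb hc, hCD hc⟩
    dsimp only
    simp only [Prod.mk.injEq]
    rw [hD, hB', hC', Finset.sdiff_union_of_subset hsub]
    exact ⟨rfl, rfl, rfl, rfl⟩
  · rintro ⟨A, B, C⟩ hp
    simp only [Finset.mem_filter, Finset.mem_univ, true_and] at hp
    obtain ⟨hk, hB, hC, hAB, hAC⟩ := hp
    dsimp only
    have e1 : A ∪ B ∩ C ∪ B \ C = A ∪ B := by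
      rw [Finset.union_assoc]
      congr 1
      rw [Finset.union_comm]
      exact Finset.sdiff_union_inter B C
    have e2 : A ∪ B ∩ C ∪ C \ B = A ∪ C := by
      rw [Finset.union_assoc]
      congr 1
      rw [Finset.union_comm, Finset.inter_comm]
      exact Finset.sdiff_union_inter C B
    rw [e1, e2]

end Aux

/-- Summing the single-set product identity over all `A` of size `k`:
`∑_{A : |A|=k} s_{A,u₁}(g₁) s_{A,u₂}(g₂) = ∑_{u ≥ 0} C(k+u, u) s_{k+u, u₁-u, u₂-u}(g₁,g₂)`
(terms with a negative index vanish). -/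
theorem stmt10 {U : Type*} [Fintype U] [DecidableEq U] (g₁ g₂ : Finset U → ℝ)
    (k u₁ u₂ : ℕ) :
    ∑ A ∈ univ.filter (fun A : Finset U => A.card = k), sA g₁ A u₁ * sA g₂ A u₂ =
      ∑ u ∈ Finset.range (min u₁ u₂ + 1),
        (Nat.choose (k + u) u : ℝ) * sK g₁ g₂ (k + u) (u₁ - u) (u₂ - u) := by
  rw [lhs_red, bij g₁ g₂ k u₁ u₂,
    Finset.sum_congr rfl fun u _ => rhs_per_u g₁ g₂ k u₁ u₂ u]
  symm
  rw [Finset.sum_comm]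
  refine Finset.sum_congr rfl fun A _ => ?_
  rw [Finset.sum_comm]
  refine Finset.sum_congr rfl fun B _ => ?_
  rw [Finset.sum_comm]
  refine Finset.sum_congr rfl fun C _ => ?_
  rw [Finset.sum_comm]
  refine Finset.sum_congr rfl fun D _ => ?_
  exact collapse k u₁ u₂ A.card B.card C.card D.card _ _
end

section
/- Inversion formula: with $s_{k,u_1,u_2}(g_1,g_2)$ and $s_{A,u}(g)$ as defined, for all $k, u_1, u_2 \ge 0$: $s_{k,u_1,u_2}(g_1,g_2) = \sum_{u \ge 0} (-1)^u \binom{k+u}{u} \sum_{A : |A| = k+u} s_{A,\,u_1-u}(g_1)\, s_{A,\,u_2-u}(g_2)$. -/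
open Finset

section Helpers

variable {α β : Type*} [Fintype α] [Fintype β]

lemma sum_if_pair (R : α → β → Prop) [∀ a, DecidablePred (R a)] [DecidablePred (fun p : α × β => R p.1 p.2)]
    (f : α → β → ℝ) :
    ∑ a : α, ∑ b : β, (if R a b then f a b else 0) =
      ∑ p ∈ (univ : Finset (α × β)).filter (fun p => R p.1 p.2), f p.1 p.2 := by
  rw [Finset.sum_filter, Fintype.sum_prod_type]
  simp

lemma pair_sum (P : α → Prop) (Q : α → β → Prop) [DecidablePred P] [∀ a, DecidablePred (Q a)]
    [DecidablePred (fun p : α × β => P p.1 ∧ Q p.1 p.2)] (f : α → β → ℝ) :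
    ∑ a ∈ univ.filter P, ∑ b ∈ univ.filter (Q a), f a b =
      ∑ p ∈ (univ : Finset (α × β)).filter (fun p => P p.1 ∧ Q p.1 p.2), f p.1 p.2 := by
  conv_rhs => rw [Finset.sum_filter, Fintype.sum_prod_type]
  rw [Finset.sum_filter]
  refine Finset.sum_congr rfl fun a _ => ?_
  by_cases h : P a
  · simp only [h, true_and, if_true, Finset.sum_filter]
  · simp [h]

end Helpers

section MainAux

variable {U : Type*} [Fintype U] [DecidableEq U] (g₁ g₂ : Finset U → ℝ)

lemma card_fiber (P : Finset U → Prop) [DecidablePred P] (n : ℕ) (f : Finset U → ℝ) :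
    ∑ d ∈ Finset.range (n+1), ∑ D ∈ univ.filter (fun D : Finset U => D.card = d ∧ P D), f D
      = ∑ D ∈ univ.filter (fun D : Finset U => D.card ≤ n ∧ P D), f D := by
  rw [← Finset.sum_fiberwise_of_maps_to (g := Finset.card)
      (t := Finset.range (n+1)) ?_ f]
  · refine Finset.sum_congr rfl fun d hd => Finset.sum_congr ?_ fun _ _ => rfl
    rw [Finset.mem_range] at hd
    ext D
    simp only [Finset.mem_filter, Finset.mem_univ, true_and]
    constructor
    · intro h
      exact ⟨⟨by omega, h.2⟩, h.1⟩
    · intro h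
      exact ⟨h.2, h.1.2⟩
  · intro D hD
    simp only [Finset.mem_filter, Finset.mem_univ, true_and] at hD
    simp only [Finset.mem_range]; omega

set_option maxHeartbeats 1000000 in
lemma core (A : Finset U) (v₁ v₂ : ℕ) :
    sA g₁ A v₁ * sA g₂ A v₂ =
      ∑ d ∈ Finset.range (min v₁ v₂ + 1),
        ∑ D ∈ univ.filter (fun D : Finset U => D.card = d ∧ Disjoint A D),
          sSet g₁ g₂ (A ∪ D) (v₁ - d) (v₂ - d) := by
  calc sA g₁ A v₁ * sA g₂ A v₂
      = ∑ B ∈ univ.filter (fun B : Finset U => B.card = v₁ ∧ Disjoint A B),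
          ∑ C ∈ univ.filter (fun C : Finset U => C.card = v₂ ∧ Disjoint A C),
            hatC g₁ (A ∪ B) * hatC g₂ (A ∪ C) := by
        unfold sA; exact Finset.sum_mul_sum _ _ _ _
    _ = ∑ p ∈ (univ : Finset (Finset U × Finset U)).filter
          (fun p => (p.1.card = v₁ ∧ Disjoint A p.1) ∧ (p.2.card = v₂ ∧ Disjoint A p.2)),
          hatC g₁ (A ∪ p.1) * hatC g₂ (A ∪ p.2) :=
        pair_sum (fun B : Finset U => B.card = v₁ ∧ Disjoint A B)
          (fun (_ C : Finset U) => C.card = v₂ ∧ Disjoint A C)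
          (fun (B C : Finset U) => hatC g₁ (A ∪ B) * hatC g₂ (A ∪ C))
    _ = ∑ q ∈ (univ : Finset (Finset U × Finset U × Finset U)).filter
          (fun q => (q.1.card ≤ min v₁ v₂ ∧ Disjoint A q.1) ∧
            (q.2.1.card = v₁ - q.1.card ∧ q.2.2.card = v₂ - q.1.card ∧
              Disjoint (A ∪ q.1) q.2.1 ∧ Disjoint (A ∪ q.1) q.2.2 ∧ Disjoint q.2.1 q.2.2)),
          hatC g₁ (A ∪ q.1 ∪ q.2.1) * hatC g₂ (A ∪ q.1 ∪ q.2.2) := by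
        refine Finset.sum_nbij' (fun p => (p.1 ∩ p.2, p.1 \ p.2, p.2 \ p.1))
          (fun q => (q.2.1 ∪ q.1, q.2.2 ∪ q.1)) ?_ ?_ ?_ ?_ ?_
        · rintro ⟨B, C⟩ hp
          simp only [Finset.mem_filter, Finset.mem_univ, true_and] at hp ⊢
          obtain ⟨⟨hB, hAB⟩, hC, hAC⟩ := hp
          have h1 := Finset.card_inter_add_card_sdiff B C
          have h2 := Finset.card_inter_add_card_sdiff C B
          have hBC : (B ∩ C).card = (C ∩ B).card := by rw [Finset.inter_comm]
          refine ⟨⟨?_, hAB.mono_right Finset.inter_subset_left⟩, ?_, ?_, ?_, ?_, ?_⟩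
          · have := Finset.card_le_card (Finset.inter_subset_left : B ∩ C ⊆ B)
            omega
          · omega
          · omega
          · exact Finset.disjoint_union_left.2 ⟨hAB.mono_right Finset.sdiff_subset,
              (Finset.disjoint_sdiff_inter B C).symm⟩
          · exact Finset.disjoint_union_left.2 ⟨hAC.mono_right Finset.sdiff_subset,
              (Finset.sdiff_disjoint.symm.mono_left Finset.inter_subset_left :
                Disjoint (B ∩ C) (C \ B))⟩
          · exact disjoint_sdiff_sdiff
        · rintro ⟨D, B', C'⟩ hq
          simp only [Finset.mem_filter, Finset.mem_univ, true_and] at hq ⊢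
          obtain ⟨⟨hd, hAD⟩, hB', hC', hADB, hADC, hBC⟩ := hq
          rw [Finset.disjoint_union_left] at hADB hADC
          refine ⟨⟨?_, Finset.disjoint_union_right.2 ⟨hADB.1, hAD⟩⟩, ?_,
            Finset.disjoint_union_right.2 ⟨hADC.1, hAD⟩⟩
          · rw [Finset.card_union_of_disjoint hADB.2.symm]
            have h1 : min v₁ v₂ ≤ v₁ := min_le_left _ _
            omega
          · rw [Finset.card_union_of_disjoint hADC.2.symm]
            have h2 : min v₁ v₂ ≤ v₂ := min_le_right _ _
            omega
        · rintro ⟨B, C⟩ _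
          simp only [Prod.mk.injEq]
          exact ⟨by rw [Finset.sdiff_union_inter],
            by rw [Finset.inter_comm, Finset.sdiff_union_inter]⟩
        · rintro ⟨D, B', C'⟩ hq
          simp only [Finset.mem_filter, Finset.mem_univ, true_and] at hq
          obtain ⟨⟨hd, hAD⟩, hB', hC', hADB, hADC, hBC⟩ := hq
          rw [Finset.disjoint_union_left] at hADB hADC
          have hDB : ∀ x, x ∈ D → x ∉ B' := fun x hx hb =>
            Finset.disjoint_left.1 hADB.2 hx hb
          have hDC : ∀ x, x ∈ D → x ∉ C' := fun x hx hc =>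
            Finset.disjoint_left.1 hADC.2 hx hc
          have hBC' : ∀ x, x ∈ B' → x ∉ C' := fun x hx hc =>
            Finset.disjoint_left.1 hBC hx hc
          simp only [Prod.mk.injEq]
          refine ⟨?_, ?_, ?_⟩
          · ext x
            simp only [Finset.mem_inter, Finset.mem_union]
            constructor
            · rintro ⟨hb | hd1, hc | hd2⟩
              · exact absurd hc (hBC' x hb)
              · exact hd2
              · exact hd1
              · exact hd1
            · intro hx; exact ⟨Or.inr hx, Or.inr hx⟩
          · ext x
            simp only [Finset.mem_sdiff, Finset.mem_union, not_or]
            constructor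
            · rintro ⟨hb | hd1, _, hnd⟩
              · exact hb
              · exact absurd hd1 hnd
            · intro hx
              exact ⟨Or.inl hx, fun hc => hBC' x hx hc, fun hd => hDB x hd hx⟩
          · ext x
            simp only [Finset.mem_sdiff, Finset.mem_union, not_or]
            constructor
            · rintro ⟨hc | hd1, _, hnd⟩
              · exact hc
              · exact absurd hd1 hnd
            · intro hx
              exact ⟨Or.inl hx, fun hb => hBC' x hb hx, fun hd => hDC x hd hx⟩
        · rintro ⟨B, C⟩ _
          simp only
          congr 2
          · rw [Finset.union_assoc, Finset.union_comm (B ∩ C), Finset.sdiff_union_inter]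
          · rw [Finset.union_assoc, Finset.union_comm (B ∩ C), Finset.inter_comm,
              Finset.sdiff_union_inter]
    _ = ∑ D ∈ univ.filter (fun D : Finset U => D.card ≤ min v₁ v₂ ∧ Disjoint A D),
          ∑ q ∈ (univ : Finset (Finset U × Finset U)).filter
            (fun q => q.1.card = v₁ - D.card ∧ q.2.card = v₂ - D.card ∧
              Disjoint (A ∪ D) q.1 ∧ Disjoint (A ∪ D) q.2 ∧ Disjoint q.1 q.2),
            hatC g₁ (A ∪ D ∪ q.1) * hatC g₂ (A ∪ D ∪ q.2) :=
        (pair_sum (fun D : Finset U => D.card ≤ min v₁ v₂ ∧ Disjoint A D)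
          (fun (D : Finset U) (q : Finset U × Finset U) => q.1.card = v₁ - D.card ∧ q.2.card = v₂ - D.card ∧
            Disjoint (A ∪ D) q.1 ∧ Disjoint (A ∪ D) q.2 ∧ Disjoint q.1 q.2)
          (fun (D : Finset U) (q : Finset U × Finset U) => hatC g₁ (A ∪ D ∪ q.1) * hatC g₂ (A ∪ D ∪ q.2))).symm
    _ = ∑ D ∈ univ.filter (fun D : Finset U => D.card ≤ min v₁ v₂ ∧ Disjoint A D),
          sSet g₁ g₂ (A ∪ D) (v₁ - D.card) (v₂ - D.card) := by
        refine Finset.sum_congr rfl fun D _ => ?_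
        unfold sSet
        exact (sum_if_pair
          (fun B₁ C : Finset U => B₁.card = v₁ - D.card ∧ C.card = v₂ - D.card ∧
            Disjoint (A ∪ D) B₁ ∧ Disjoint (A ∪ D) C ∧ Disjoint B₁ C)
          (fun B₁ C => hatC g₁ (A ∪ D ∪ B₁) * hatC g₂ (A ∪ D ∪ C))).symm
    _ = ∑ d ∈ Finset.range (min v₁ v₂ + 1),
          ∑ D ∈ univ.filter (fun D : Finset U => D.card = d ∧ Disjoint A D),
            sSet g₁ g₂ (A ∪ D) (v₁ - D.card) (v₂ - D.card) :=
        (card_fiber _ _ _).symm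
    _ = ∑ d ∈ Finset.range (min v₁ v₂ + 1),
          ∑ D ∈ univ.filter (fun D : Finset U => D.card = d ∧ Disjoint A D),
            sSet g₁ g₂ (A ∪ D) (v₁ - d) (v₂ - d) := by
        refine Finset.sum_congr rfl fun d _ => Finset.sum_congr rfl fun D hD => ?_
        rw [(Finset.mem_filter.1 hD).2.1]

lemma piece1 (m d : ℕ) (f : Finset U → ℝ) :
    ∑ A ∈ univ.filter (fun A : Finset U => A.card = m),
      ∑ D ∈ univ.filter (fun D : Finset U => D.card = d ∧ Disjoint A D), f (A ∪ D)
    = ((m+d).choose d : ℝ) * ∑ A ∈ univ.filter (fun A : Finset U => A.card = m + d), f A := by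
  calc ∑ A ∈ univ.filter (fun A : Finset U => A.card = m),
        ∑ D ∈ univ.filter (fun D : Finset U => D.card = d ∧ Disjoint A D), f (A ∪ D)
      = ∑ p ∈ (univ : Finset (Finset U × Finset U)).filter
          (fun p => p.1.card = m ∧ (p.2.card = d ∧ Disjoint p.1 p.2)), f (p.1 ∪ p.2) :=
        pair_sum (fun A : Finset U => A.card = m)
          (fun (A D : Finset U) => D.card = d ∧ Disjoint A D)
          (fun (A D : Finset U) => f (A ∪ D))
    _ = ∑ q ∈ (univ : Finset (Finset U × Finset U)).filter
          (fun q => q.1.card = m + d ∧ (q.2 ⊆ q.1 ∧ q.2.card = d)), f q.1 := by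
        refine Finset.sum_nbij' (fun p => (p.1 ∪ p.2, p.2)) (fun q => (q.1 \ q.2, q.2))
          ?_ ?_ ?_ ?_ ?_
        · rintro ⟨A, D⟩ hp
          simp only [Finset.mem_filter, Finset.mem_univ, true_and] at hp ⊢
          obtain ⟨hA, hD, hAD⟩ := hp
          exact ⟨by rw [Finset.card_union_of_disjoint hAD]; omega,
            Finset.subset_union_right, hD⟩
        · rintro ⟨A', D⟩ hq
          simp only [Finset.mem_filter, Finset.mem_univ, true_and] at hq ⊢
          obtain ⟨hA', hsub, hD⟩ := hq
          refine ⟨by rw [Finset.card_sdiff_of_subset hsub]; omega, hD, Finset.sdiff_disjoint⟩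
        · rintro ⟨A, D⟩ hp
          simp only [Finset.mem_filter, Finset.mem_univ, true_and] at hp
          simp only [Prod.mk.injEq]
          exact ⟨by rw [Finset.union_sdiff_right, Finset.sdiff_eq_self_of_disjoint hp.2.2],
            trivial⟩
        · rintro ⟨A', D⟩ hq
          simp only [Finset.mem_filter, Finset.mem_univ, true_and] at hq
          simp only [Prod.mk.injEq]
          exact ⟨Finset.sdiff_union_of_subset hq.2.1, trivial⟩
        · rintro ⟨A, D⟩ _
          rfl
    _ = ∑ A ∈ univ.filter (fun A : Finset U => A.card = m + d),
          ∑ D ∈ univ.filter (fun D : Finset U => D ⊆ A ∧ D.card = d), f A :=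
        (pair_sum (fun A : Finset U => A.card = m + d)
          (fun (A D : Finset U) => D ⊆ A ∧ D.card = d)
          (fun (A _ : Finset U) => f A)).symm
    _ = ∑ A ∈ univ.filter (fun A : Finset U => A.card = m + d),
          ((m+d).choose d : ℝ) * f A := by
        refine Finset.sum_congr rfl fun A hA => ?_
        rw [Finset.mem_filter] at hA
        have hfil : univ.filter (fun D : Finset U => D ⊆ A ∧ D.card = d)
            = A.powersetCard d := by
          ext D
          simp [Finset.mem_powersetCard]
        rw [hfil, Finset.sum_const, Finset.card_powersetCard, hA.2, nsmul_eq_mul]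
    _ = ((m+d).choose d : ℝ) * ∑ A ∈ univ.filter (fun A : Finset U => A.card = m + d), f A :=
        (Finset.mul_sum _ _ _).symm

lemma L1 (m v₁ v₂ : ℕ) :
    ∑ A ∈ univ.filter (fun A : Finset U => A.card = m), sA g₁ A v₁ * sA g₂ A v₂
    = ∑ d ∈ Finset.range (min v₁ v₂ + 1),
        ((m+d).choose d : ℝ) * sK g₁ g₂ (m+d) (v₁-d) (v₂-d) := by
  calc ∑ A ∈ univ.filter (fun A : Finset U => A.card = m), sA g₁ A v₁ * sA g₂ A v₂
      = ∑ A ∈ univ.filter (fun A : Finset U => A.card = m),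
          ∑ d ∈ Finset.range (min v₁ v₂ + 1),
            ∑ D ∈ univ.filter (fun D : Finset U => D.card = d ∧ Disjoint A D),
              sSet g₁ g₂ (A ∪ D) (v₁ - d) (v₂ - d) :=
        Finset.sum_congr rfl fun A _ => core g₁ g₂ A v₁ v₂
    _ = ∑ d ∈ Finset.range (min v₁ v₂ + 1),
          ∑ A ∈ univ.filter (fun A : Finset U => A.card = m),
            ∑ D ∈ univ.filter (fun D : Finset U => D.card = d ∧ Disjoint A D),
              sSet g₁ g₂ (A ∪ D) (v₁ - d) (v₂ - d) :=
        Finset.sum_comm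
    _ = ∑ d ∈ Finset.range (min v₁ v₂ + 1),
          ((m+d).choose d : ℝ) * sK g₁ g₂ (m+d) (v₁-d) (v₂-d) := by
        refine Finset.sum_congr rfl fun d _ => ?_
        unfold sK
        exact piece1 m d (fun A => sSet g₁ g₂ A (v₁ - d) (v₂ - d))

lemma triangle (M : ℕ) (f : ℕ → ℕ → ℝ) :
    ∑ u ∈ Finset.range (M+1), ∑ d ∈ Finset.range (M - u + 1), f u d
      = ∑ t ∈ Finset.range (M+1), ∑ u ∈ Finset.range (t+1), f u (t - u) := by
  rw [Finset.sum_sigma', Finset.sum_sigma']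
  refine Finset.sum_nbij' (fun p => ⟨p.1 + p.2, p.1⟩) (fun q => ⟨q.2, q.1 - q.2⟩)
    ?_ ?_ ?_ ?_ ?_
  · rintro ⟨u, d⟩ hp
    simp only [Finset.mem_sigma, Finset.mem_range] at hp ⊢
    omega
  · rintro ⟨t, u⟩ hq
    simp only [Finset.mem_sigma, Finset.mem_range] at hq ⊢
    omega
  · rintro ⟨u, d⟩ hp
    simp only [Finset.mem_sigma, Finset.mem_range] at hp
    simp only [Sigma.mk.inj_iff, heq_eq_eq]
    refine ⟨trivial, ?_⟩
    omega
  · rintro ⟨t, u⟩ hq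
    simp only [Finset.mem_sigma, Finset.mem_range] at hq
    simp only [Sigma.mk.inj_iff, heq_eq_eq]
    refine ⟨?_, trivial⟩
    omega
  · rintro ⟨u, d⟩ _
    simp only
    congr 1
    omega

lemma natbin (k t u : ℕ) (h : u ≤ t) :
    (k+u).choose u * (k+t).choose (t-u) = (k+t).choose t * t.choose u := by
  have h1 := Nat.choose_mul (n := k+t) (k := k+u) (s := k)
    (by omega)
  have e1 : k + t - k = t := by omega
  have e2 : k + u - k = u := by omega
  rw [e1, e2] at h1
  rw [Nat.choose_symm_of_eq_add (show k + t = (k+u) + (t-u) by omega)] at h1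
  rw [show (k+u).choose k = (k+u).choose u from Nat.choose_symm_add] at h1
  rw [show (k+t).choose k = (k+t).choose t from Nat.choose_symm_add] at h1
  rw [Nat.mul_comm]
  exact h1

lemma alt_sum (t : ℕ) :
    ∑ u ∈ Finset.range (t+1), (-1:ℝ)^u * (t.choose u : ℝ) = if t = 0 then 1 else 0 := by
  have h := Int.alternating_sum_range_choose (n := t)
  have h2 := congrArg (fun z : ℤ => (z : ℝ)) h
  push_cast at h2
  simpa using h2

end MainAux

/-- The inversion formula:
`s_{k,u₁,u₂}(g₁,g₂) = ∑_{u ≥ 0} (-1)^u C(k+u,u) ∑_{A : |A| = k+u} s_{A,u₁-u}(g₁) s_{A,u₂-u}(g₂)`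
(terms with a negative index vanish). -/
theorem stmt11 {U : Type*} [Fintype U] [DecidableEq U] (g₁ g₂ : Finset U → ℝ)
    (k u₁ u₂ : ℕ) :
    sK g₁ g₂ k u₁ u₂ =
      ∑ u ∈ Finset.range (min u₁ u₂ + 1),
        (-1 : ℝ) ^ u * (Nat.choose (k + u) u : ℝ) *
          ∑ A ∈ univ.filter (fun A : Finset U => A.card = k + u),
            sA g₁ A (u₁ - u) * sA g₂ A (u₂ - u) := by

  symm
  calc ∑ u ∈ Finset.range (min u₁ u₂ + 1),
        (-1 : ℝ) ^ u * (Nat.choose (k + u) u : ℝ) *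
          ∑ A ∈ univ.filter (fun A : Finset U => A.card = k + u),
            sA g₁ A (u₁ - u) * sA g₂ A (u₂ - u)
      = ∑ u ∈ Finset.range (min u₁ u₂ + 1), ∑ d ∈ Finset.range (min u₁ u₂ - u + 1),
          (-1:ℝ)^u * ((k+u).choose u : ℝ) *
            (((k+u+d).choose d : ℝ) * sK g₁ g₂ (k+u+d) (u₁-u-d) (u₂-u-d)) := by
        refine Finset.sum_congr rfl fun u hu => ?_
        rw [Finset.mem_range] at hu
        rw [L1 g₁ g₂ (k+u) (u₁-u) (u₂-u)]
        have h1 : min (u₁-u) (u₂-u) = min u₁ u₂ - u := by omega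
        rw [h1, Finset.mul_sum]
    _ = ∑ t ∈ Finset.range (min u₁ u₂ + 1), ∑ u ∈ Finset.range (t+1),
          (-1:ℝ)^u * ((k+u).choose u : ℝ) *
            (((k+u+(t-u)).choose (t-u) : ℝ) *
              sK g₁ g₂ (k+u+(t-u)) (u₁-u-(t-u)) (u₂-u-(t-u))) :=
        triangle (min u₁ u₂) (fun u d => (-1:ℝ)^u * ((k+u).choose u : ℝ) *
          (((k+u+d).choose d : ℝ) * sK g₁ g₂ (k+u+d) (u₁-u-d) (u₂-u-d)))
    _ = ∑ t ∈ Finset.range (min u₁ u₂ + 1),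
          (∑ u ∈ Finset.range (t+1),
            (-1:ℝ)^u * ((k+u).choose u : ℝ) * ((k+t).choose (t-u) : ℝ)) *
            sK g₁ g₂ (k+t) (u₁-t) (u₂-t) := by
        refine Finset.sum_congr rfl fun t ht => ?_
        rw [Finset.mem_range] at ht
        rw [Finset.sum_mul]
        refine Finset.sum_congr rfl fun u hu => ?_
        rw [Finset.mem_range] at hu
        have e1 : k + u + (t - u) = k + t := by omega
        have e2 : u₁ - u - (t-u) = u₁ - t := by omega
        have e3 : u₂ - u - (t-u) = u₂ - t := by omega
        rw [e1, e2, e3]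
        ring
    _ = ∑ t ∈ Finset.range (min u₁ u₂ + 1),
          (if t = 0 then (1:ℝ) else 0) * sK g₁ g₂ (k+t) (u₁-t) (u₂-t) := by
        refine Finset.sum_congr rfl fun t _ => ?_
        congr 1
        calc ∑ u ∈ Finset.range (t+1),
              (-1:ℝ)^u * ((k+u).choose u : ℝ) * ((k+t).choose (t-u) : ℝ)
            = ∑ u ∈ Finset.range (t+1),
                ((k+t).choose t : ℝ) * ((-1:ℝ)^u * (t.choose u : ℝ)) := by
              refine Finset.sum_congr rfl fun u hu => ?_
              rw [Finset.mem_range] at hu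
              have h := natbin k t u (by omega)
              have h2 : ((k+u).choose u : ℝ) * ((k+t).choose (t-u) : ℝ)
                  = ((k+t).choose t : ℝ) * (t.choose u : ℝ) := by exact_mod_cast h
              linear_combination ((-1:ℝ)^u) * h2
          _ = ((k+t).choose t : ℝ) *
                ∑ u ∈ Finset.range (t+1), (-1:ℝ)^u * (t.choose u : ℝ) :=
              (Finset.mul_sum _ _ _).symm
          _ = ((k+t).choose t : ℝ) * (if t = 0 then 1 else 0) := by rw [alt_sum]
          _ = (if t = 0 then (1:ℝ) else 0) := by
              split_ifs with h
              · subst h; simp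
              · ring
    _ = sK g₁ g₂ k u₁ u₂ := by
        rw [Finset.sum_eq_single 0]
        · simp
        · intro t _ ht
          simp [ht]
        · intro h
          exact absurd (Finset.mem_range.2 (by omega)) h
end

section
/- Let $n > 2k$ and let $P_k$ be the 0/1 inclusion matrix whose rows are indexed by $k$-subsets and columns by $(k+1)$-subsets of an $n$-element set $U$, with $(P_k)_{AB} = 1$ iff $A \subseteq B$. Then the eigenvalues of $P_k P_k^T$ are exactly $(n-k-i)(k+1-i)$ for $i \in \{0, 1, \dots, k\}$, with the eigenvalue $(n-k-i)(k+1-i)$ having multiplicity $\binom{n}{i} - \binom{n}{i-1}$. -/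
open Finset Polynomial Matrix

/-- The 0/1 inclusion matrix between `k`-subsets and `(k+1)`-subsets of `Fin n`:
`(P_k)_{AB} = 1` iff `A ⊆ B`. -/
noncomputable def Pincl (n k : ℕ) :
    Matrix {A : Finset (Fin n) // A.card = k} {B : Finset (Fin n) // B.card = k + 1} ℝ :=
  fun A B => if A.1 ⊆ B.1 then 1 else 0

section Aux

variable {R : Type*} [CommRing R] {m : Type*} {l : Type*} [Fintype m] [Fintype l]
  [DecidableEq m] [DecidableEq l]

lemma charpoly_mul_comm_rect (A : Matrix m l R) (B : Matrix l m R) :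
    X ^ (Fintype.card l) * (A * B).charpoly = X ^ (Fintype.card m) * (B * A).charpoly := by
  classical
  set A' : Matrix m l R[X] := A.map C with hA'
  set B' : Matrix l m R[X] := B.map C with hB'
  set M : Matrix (m ⊕ l) (m ⊕ l) R[X] :=
    fromBlocks ((X : R[X]) • 1) A' B' 1 with hM
  have hG : M * fromBlocks 1 0 (-B') 1 =
      fromBlocks ((X : R[X]) • 1 - A' * B') A' 0 1 := by
    rw [hM, fromBlocks_multiply]
    congr 1 <;> simp [Matrix.smul_mul, Matrix.mul_smul, sub_eq_add_neg, Matrix.mul_neg] <;> abel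
  have hF : (fromBlocks 1 0 (-B') ((X : R[X]) • 1) : Matrix (m ⊕ l) (m ⊕ l) R[X]) * M =
      fromBlocks ((X : R[X]) • 1) A' 0 ((X : R[X]) • 1 - B' * A') := by
    rw [hM, fromBlocks_multiply]
    congr 1 <;> simp [Matrix.smul_mul, Matrix.mul_smul, sub_eq_add_neg, Matrix.neg_mul] <;> abel
  have hdetG : (fromBlocks 1 0 (-B') 1 : Matrix (m ⊕ l) (m ⊕ l) R[X]).det = 1 := by
    rw [det_fromBlocks_zero₁₂]; simp
  have hdetF : (fromBlocks 1 0 (-B') ((X : R[X]) • 1) : Matrix (m ⊕ l) (m ⊕ l) R[X]).det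
      = X ^ (Fintype.card l) := by
    rw [det_fromBlocks_zero₁₂]; simp
  have hchar1 : ((X : R[X]) • (1 : Matrix m m R[X]) - A' * B').det = (A * B).charpoly := by
    rw [Matrix.charpoly, charmatrix]
    congr 1
    rw [scalar_apply, smul_eq_diagonal_mul, Matrix.mul_one]
    simp [hA', hB', Matrix.map_mul]
  have hchar2 : ((X : R[X]) • (1 : Matrix l l R[X]) - B' * A').det = (B * A).charpoly := by
    rw [Matrix.charpoly, charmatrix]
    congr 1
    rw [scalar_apply, smul_eq_diagonal_mul, Matrix.mul_one]
    simp [hA', hB', Matrix.map_mul]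
  have hdetM : M.det = (A * B).charpoly := by
    have := congrArg Matrix.det hG
    rw [det_mul, hdetG, mul_one, det_fromBlocks_zero₂₁, det_one, mul_one, hchar1] at this
    exact this
  have h2 := congrArg Matrix.det hF
  rw [det_mul, hdetF, hdetM, det_fromBlocks_zero₂₁, hchar2] at h2
  rw [h2]
  simp [mul_comm]

lemma charpoly_add_smul_one (M : Matrix m m R) (c : R) :
    (M + c • 1).charpoly = aeval (X - C c) M.charpoly := by
  rw [Matrix.charpoly, Matrix.charpoly, ← AlgHom.coe_toRingHom, RingHom.map_det]
  congr 1
  ext i j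
  by_cases hij : i = j
  · subst hij
    simp [charmatrix_apply_eq, RingHom.mapMatrix_apply, Matrix.map_apply, map_sub, aeval_X, aeval_C]
    ring
  · simp [charmatrix_apply_ne _ _ _ hij, RingHom.mapMatrix_apply, Matrix.map_apply,
      Matrix.one_apply_ne hij, hij]

end Aux

lemma card_supersets {n : ℕ} (S : Finset (Fin n)) (m : ℕ) (hS : S.card ≤ m) :
    ((Finset.univ : Finset (Finset (Fin n))).filter fun B => B.card = m ∧ S ⊆ B).card
      = (n - S.card).choose (m - S.card) := by
  have hc : Sᶜ.card = n - S.card := by rw [Finset.card_compl, Fintype.card_fin]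
  rw [← hc, ← Finset.card_powersetCard (m - S.card) Sᶜ]
  apply Finset.card_bij (fun B _ => B \ S)
  · intro B hB
    simp only [Finset.mem_filter, Finset.mem_univ, true_and] at hB
    rw [Finset.mem_powersetCard]
    constructor
    · intro x hx
      simp only [Finset.mem_sdiff] at hx
      simp [Finset.mem_compl, hx.2]
    · rw [Finset.card_sdiff_of_subset hB.2, hB.1]
  · intro B hB B' hB' hEq
    simp only [Finset.mem_filter, Finset.mem_univ, true_and] at hB hB'
    have : B \ S ∪ S = B' \ S ∪ S := by rw [hEq]
    rwa [Finset.sdiff_union_of_subset hB.2, Finset.sdiff_union_of_subset hB'.2] at this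
  · intro T hT
    rw [Finset.mem_powersetCard] at hT
    refine ⟨T ∪ S, ?_, ?_⟩
    · simp only [Finset.mem_filter, Finset.mem_univ, true_and]
      have hdisj : Disjoint T S := by
        rw [Finset.disjoint_left]
        intro a ha
        have := hT.1 ha
        simpa [Finset.mem_compl] using this
      constructor
      · rw [Finset.card_union_of_disjoint hdisj, hT.2]
        omega
      · exact Finset.subset_union_right
    · rw [Finset.union_sdiff_right]
      apply Finset.sdiff_eq_self_of_disjoint
      rw [Finset.disjoint_left]
      intro a ha
      have := hT.1 ha
      simpa [Finset.mem_compl] using this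

lemma card_subsets {n : ℕ} (D : Finset (Fin n)) (m : ℕ) :
    ((Finset.univ : Finset (Finset (Fin n))).filter fun C => C.card = m ∧ C ⊆ D).card
      = D.card.choose m := by
  rw [← Finset.card_powersetCard m D]
  congr 1
  ext C
  simp [Finset.mem_powersetCard, and_comm]

lemma sum_ind {n m : ℕ} (p : Finset (Fin n) → Prop) [DecidablePred p] :
    (∑ B : {B : Finset (Fin n) // B.card = m}, if p B.1 then (1:ℝ) else 0)
      = ((Finset.univ.filter fun B : Finset (Fin n) => B.card = m ∧ p B).card : ℝ) := by
  rw [← Finset.sum_subtype (Finset.univ.filter fun B : Finset (Fin n) => B.card = m)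
    (by simp) (fun B => if p B then (1:ℝ) else 0)]
  rw [Finset.sum_boole, Finset.filter_filter]

lemma key (n k : ℕ) (h : 2 * (k + 1) ≤ n) :
    Pincl n (k+1) * (Pincl n (k+1))ᵀ
      = (Pincl n k)ᵀ * Pincl n k + (((n - 2*(k+1) : ℕ) : ℝ)) • 1 := by
  ext A A'
  have hL : (Pincl n (k+1) * (Pincl n (k+1))ᵀ) A A'
      = ((Finset.univ.filter fun B : Finset (Fin n) =>
          B.card = k + 2 ∧ A.1 ∪ A'.1 ⊆ B).card : ℝ) := by
    rw [Matrix.mul_apply, ← sum_ind (fun B => A.1 ∪ A'.1 ⊆ B)]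
    apply Finset.sum_congr rfl
    intro B _
    simp only [Pincl, Matrix.transpose_apply, Finset.union_subset_iff]
    by_cases h1 : A.1 ⊆ B.1 <;> by_cases h2 : A'.1 ⊆ B.1 <;> simp [h1, h2]
  have hR : ((Pincl n k)ᵀ * Pincl n k) A A'
      = (((A.1 ∩ A'.1).card.choose k : ℕ) : ℝ) := by
    rw [Matrix.mul_apply, ← card_subsets (A.1 ∩ A'.1) k,
      ← sum_ind (fun C => C ⊆ A.1 ∩ A'.1)]
    apply Finset.sum_congr rfl
    intro C _
    simp only [Pincl, Matrix.transpose_apply, Finset.subset_inter_iff]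
    by_cases h1 : C.1 ⊆ A.1 <;> by_cases h2 : C.1 ⊆ A'.1 <;> simp [h1, h2]
  rw [Matrix.add_apply, hL, hR, Matrix.smul_apply]
  by_cases hAA : A = A'
  · subst hAA
    rw [Matrix.one_apply_eq, smul_eq_mul, mul_one]
    have h0 : A.1 ∪ A.1 = A.1 := Finset.union_self _
    rw [h0, card_supersets A.1 (k+2) (by rw [A.2]; omega)]
    rw [A.2, ← Nat.cast_add, Nat.cast_inj]
    have h1 : A.1 ∩ A.1 = A.1 := Finset.inter_self _
    rw [h1, A.2]
    rw [show k + 2 - (k+1) = 1 from by omega, Nat.choose_one_right,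
      Nat.choose_succ_self_right]
    omega
  · have hne : A.1 ≠ A'.1 := fun hc => hAA (Subtype.ext hc)
    rw [Matrix.one_apply_ne hAA, smul_eq_mul, mul_zero, add_zero, Nat.cast_inj]
    have hcu : k + 2 ≤ (A.1 ∪ A'.1).card := by
      rcases Nat.lt_or_ge (A.1 ∪ A'.1).card (k+2) with hlt | hge
      · exfalso
        have hsub : A.1 ⊆ A.1 ∪ A'.1 := Finset.subset_union_left
        have heq := Finset.eq_of_subset_of_card_le hsub (by rw [A.2]; omega)
        have hsub' : A'.1 ⊆ A.1 := by rw [heq]; exact Finset.subset_union_right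
        exact hne (Finset.eq_of_subset_of_card_le hsub' (by rw [A.2, A'.2])).symm
      · exact hge
    have hci : (A.1 ∩ A'.1).card + (A.1 ∪ A'.1).card = 2 * k + 2 := by
      have := Finset.card_inter_add_card_union A.1 A'.1
      rw [A.2, A'.2] at this
      omega
    rcases eq_or_lt_of_le hcu with heq | hlt
    · rw [card_supersets _ (k+2) (by omega), ← heq]
      rw [show k + 2 - (k+2) = 0 from by omega, Nat.choose_zero_right,
        show (A.1 ∩ A'.1).card = k from by omega, Nat.choose_self]
    · have hemp : (Finset.univ.filter fun B : Finset (Fin n) =>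
          B.card = k + 2 ∧ A.1 ∪ A'.1 ⊆ B) = ∅ := by
        rw [Finset.filter_eq_empty_iff]
        intro B _
        rintro ⟨hB1, hB2⟩
        have := Finset.card_le_card hB2
        omega
      rw [hemp, Finset.card_empty, Nat.choose_eq_zero_of_lt (by omega)]

instance pincl_unique (n : ℕ) : Unique {A : Finset (Fin n) // A.card = 0} where
  default := ⟨∅, Finset.card_empty⟩
  uniq := fun A => Subtype.ext (by simpa using Finset.card_eq_zero.mp A.2)

lemma arith_aux (n k i : ℕ) (hi : i ≤ k) (h : 2 * (k + 1) ≤ n) :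
    (n - 2*(k+1)) + (n - k - i) * (k + 1 - i) = (n - (k+1) - i) * (k + 2 - i) := by
  zify [show 2*(k+1) ≤ n from h, show i ≤ k + 1 from by omega, show i ≤ k + 2 from by omega,
    show k ≤ n from by omega, show i ≤ n - k from by omega, show k + 1 ≤ n from by omega,
    show i ≤ n - (k+1) from by omega]
  ring

/-- For `n > 2k`, the eigenvalues of `P_k P_kᵀ` are exactly `(n-k-i)(k+1-i)` for
`i ∈ {0,…,k}`, with multiplicity `C(n,i) - C(n,i-1)` (where `C(n,-1) = 0`);
expressed via the characteristic polynomial. -/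
theorem stmt17 (n k : ℕ) (h : 2 * k < n) :
    (Pincl n k * (Pincl n k)ᵀ).charpoly =
      ∏ i ∈ Finset.range (k + 1),
        (X - C (((n - k - i) * (k + 1 - i) : ℕ) : ℝ)) ^
          (Nat.choose n i - if i = 0 then 0 else Nat.choose n (i - 1)) := by
  induction k with
  | zero =>
      have hM : (Pincl n 0 * (Pincl n 0)ᵀ).charpoly
          = X - C ((Pincl n 0 * (Pincl n 0)ᵀ) default default) := by
        rw [Matrix.charpoly, Matrix.det_unique, charmatrix_apply_eq]
      have hE : (Pincl n 0 * (Pincl n 0)ᵀ) default default = (n : ℝ) := by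
        rw [Matrix.mul_apply]
        have : ∀ B : {B : Finset (Fin n) // B.card = 0 + 1},
            Pincl n 0 default B * (Pincl n 0)ᵀ B default = 1 := by
          intro B
          simp [Pincl, Matrix.transpose_apply, Finset.empty_subset,
            show (default : {A : Finset (Fin n) // A.card = 0}).1 = ∅ from rfl]
        rw [Finset.sum_congr rfl (fun B _ => this B)]
        rw [Finset.sum_const, Finset.card_univ, Fintype.card_finset_len, Fintype.card_fin]
        simp [Nat.choose_one_right]
      rw [hM, hE, Finset.prod_range_one]
      norm_num
  | succ k ih =>
      have hk2 : 2 * (k + 1) ≤ n := by omega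
      rw [key n k hk2, charpoly_add_smul_one]
      have hcard1 : Fintype.card {A : Finset (Fin n) // A.card = k} = n.choose k := by
        rw [Fintype.card_finset_len, Fintype.card_fin]
      have hcard2 : Fintype.card {B : Finset (Fin n) // B.card = k + 1} = n.choose (k+1) := by
        rw [Fintype.card_finset_len, Fintype.card_fin]
      have hle : n.choose k ≤ n.choose (k+1) := by
        have hmul := Nat.choose_succ_right_eq n k
        have h1 : n.choose k * (k+1) ≤ n.choose k * (n - k) :=
          Nat.mul_le_mul_left _ (by omega)
        rw [← hmul] at h1
        exact Nat.le_of_mul_le_mul_right h1 (by omega)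
      have hPtP : ((Pincl n k)ᵀ * Pincl n k).charpoly
          = X ^ (n.choose (k+1) - n.choose k) * (Pincl n k * (Pincl n k)ᵀ).charpoly := by
        have hx : (X : ℝ[X]) ^ (n.choose k) ≠ 0 := pow_ne_zero _ X_ne_zero
        apply mul_left_cancel₀ hx
        have hL1 := charpoly_mul_comm_rect (Pincl n k) (Pincl n k)ᵀ
        rw [hcard1, hcard2] at hL1
        rw [← hL1, ← mul_assoc, ← pow_add, Nat.add_sub_cancel' hle]
      rw [hPtP, ih (by omega)]
      simp only [_root_.map_mul, map_pow, map_prod, map_sub, aeval_X, aeval_C,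
        Polynomial.algebraMap_eq]
      conv_rhs => rw [Finset.prod_range_succ]
      rw [mul_comm]
      congr 1
      · apply Finset.prod_congr rfl
        intro i hi
        rw [Finset.mem_range] at hi
        congr 1
        rw [sub_sub, ← C_add, ← Nat.cast_add, arith_aux n k i (by omega) hk2]
      · rw [show k + 1 + 1 - (k + 1) = 1 from by omega,
          show n - (k+1) - (k+1) = n - 2*(k+1) from by omega]
        simp [mul_one]
end

section
/- Let $n > 2k$ and let $P_k$ be the inclusion matrix between $k$-subsets and $(k+1)$-subsets of an $n$-set. For $V \subseteq U$ with $|V| = m \le k$, define the vector $x_V$ indexed by $k$-subsets $B$ by $(x_V)_B = (-1)^{|B \cap V|} / |\{C : |C| = k,\ C \cap V = B \cap V\}|$. Then $x_V$ is an eigenvector of $P_k P_k^T$ with eigenvalue $(n-k-m)(k+1-m)$. -/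
open Finset Matrix

noncomputable def gf (n m k t : ℕ) : ℝ := (-1 : ℝ) ^ t / ((n - m).choose (k - t) : ℝ)

lemma countA (n k : ℕ) (V S : Finset (Fin n)) (hS : S ⊆ V) (hs : S.card ≤ k) :
    (Finset.univ.filter fun C : Finset (Fin n) => C.card = k ∧ C ∩ V = S).card
      = (n - V.card).choose (k - S.card) := by
  have hcompl : Vᶜ.card = n - V.card := by rw [card_compl, Fintype.card_fin]
  rw [← hcompl, ← Finset.card_powersetCard]
  apply Finset.card_bij (fun C _ => C \ V)
  · intro C hC
    simp only [mem_filter, mem_univ, true_and] at hC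
    rw [mem_powersetCard]
    constructor
    · intro a ha; simp only [mem_sdiff] at ha; simpa using ha.2
    · have : C.card = (C ∩ V).card + (C \ V).card := by
        rw [Finset.card_inter_add_card_sdiff]
      rw [hC.2] at this
      omega
  · intro C1 h1 C2 h2 he
    simp only [mem_filter, mem_univ, true_and] at h1 h2
    have key : ∀ C : Finset (Fin n), C = (C ∩ V) ∪ (C \ V) := fun C => by
      ext a; simp only [Finset.mem_union, Finset.mem_inter, Finset.mem_sdiff]; tauto
    have e1 := key C1
    have e2 := key C2
    rw [e1, e2, h1.2, h2.2, he]
  · intro D hD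
    rw [mem_powersetCard] at hD
    refine ⟨S ∪ D, ?_, ?_⟩
    · simp only [mem_filter, mem_univ, true_and]
      have hdis : Disjoint S D := by
        refine Finset.disjoint_left.2 fun a haS haD => ?_
        have := hD.1 haD; simp at this; exact this (hS haS)
      constructor
      · rw [Finset.card_union_of_disjoint hdis, hD.2]
        omega
      · rw [Finset.union_inter_distrib_right]
        have h1 : S ∩ V = S := Finset.inter_eq_left.2 hS
        have h2 : D ∩ V = ∅ := by
          refine Finset.eq_empty_of_forall_notMem fun a ha => ?_
          simp only [mem_inter] at ha
          have := hD.1 ha.1; simp at this; exact this ha.2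
        rw [h1, h2, Finset.union_empty]
    · rw [Finset.union_sdiff_distrib]
      have h1 : S \ V = ∅ := Finset.sdiff_eq_empty_iff_subset.2 hS
      have h2 : D \ V = D := by
        refine Finset.sdiff_eq_self_iff_disjoint.2 (Finset.disjoint_left.2 fun a ha hv => ?_)
        have := hD.1 ha; simp at this; exact this hv
      rw [h1, h2, Finset.empty_union]

lemma keyId (n m k j : ℕ) (h : 2 * k < n) (hm : m ≤ k) (hj : j ≤ m) :
    ((n - k : ℕ) : ℝ) * gf n m k j
      + ((m - j : ℕ) : ℝ) * ((j : ℝ) * gf n m k j + ((k - j : ℕ) : ℝ) * gf n m k (j + 1))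
      + (((n - k) - (m - j) : ℕ) : ℝ) * ((j : ℝ) * gf n m k (j - 1) + ((k - j : ℕ) : ℝ) * gf n m k j)
    = (((n - k - m) * (k + 1 - m) : ℕ) : ℝ) * gf n m k j := by
  have hjk : j ≤ k := hj.trans hm
  have hNa : (k - j) + 1 ≤ n - m := by omega
  have e1 : ((n - k : ℕ) : ℝ) = (n : ℝ) - k := by
    rw [Nat.cast_sub (by omega : k ≤ n)]
  have e2 : ((m - j : ℕ) : ℝ) = (m : ℝ) - j := by rw [Nat.cast_sub hj]
  have e3 : ((k - j : ℕ) : ℝ) = (k : ℝ) - j := by rw [Nat.cast_sub hjk]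
  have e4 : (((n - k) - (m - j) : ℕ) : ℝ) = (n : ℝ) - k - m + j := by
    have h' : (n - k) - (m - j) = n - (k + m) + j := by omega
    rw [h']
    push_cast [Nat.cast_sub (by omega : k + m ≤ n)]
    ring
  have e5 : (((n - k - m) * (k + 1 - m) : ℕ) : ℝ) = ((n : ℝ) - k - m) * ((k : ℝ) + 1 - m) := by
    have h' : n - k - m = n - (k + m) := by omega
    rw [Nat.cast_mul, h', Nat.cast_sub (by omega : k + m ≤ n),
      Nat.cast_sub (by omega : m ≤ k + 1)]
    push_cast; ring
  have eN : ((n - m : ℕ) : ℝ) = (n : ℝ) - m := by rw [Nat.cast_sub (by omega : m ≤ n)]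
  have c0pos : (0 : ℝ) < ((n - m).choose (k - j) : ℝ) := by
    exact_mod_cast Nat.choose_pos (by omega)
  have c1pos : (0 : ℝ) < ((n - m).choose (k - j + 1) : ℝ) := by
    exact_mod_cast Nat.choose_pos hNa
  have r1R : ((n - m).choose ((k - j) + 1) : ℝ) * (((k : ℝ) - j) + 1)
      = ((n - m).choose (k - j) : ℝ) * (((n : ℝ) - m) - ((k : ℝ) - j)) := by
    have h0 := Nat.choose_succ_right_eq (n - m) (k - j)
    have hc := congrArg (Nat.cast : ℕ → ℝ) h0
    rw [Nat.cast_mul, Nat.cast_mul, Nat.cast_sub (by omega : k - j ≤ n - m), eN] at hc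
    push_cast at hc
    rw [e3] at hc
    linarith
  have hup : ((m : ℝ) - j) * (((k : ℝ) - j) * gf n m k (j + 1))
      = ((m : ℝ) - j) * (-((((n : ℝ) - m) - ((k : ℝ) - j)) + 1)) * gf n m k j := by
    rcases Nat.eq_zero_or_pos (k - j) with ha0 | hapos
    · have hmj : (m : ℝ) - j = 0 := by
        have : m = j := by omega
        rw [this]; ring
      rw [hmj]; ring
    · have hkj1 : k - (j + 1) = (k - j) - 1 := by omega
      have r2R : ((n - m).choose (k - j) : ℝ) * ((k : ℝ) - j)
          = ((n - m).choose ((k - j) - 1) : ℝ) * (((n : ℝ) - m) - ((k : ℝ) - j) + 1) := by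
        have h0 := Nat.choose_succ_right_eq (n - m) ((k - j) - 1)
        have hs : k - j - 1 + 1 = k - j := by omega
        rw [hs] at h0
        have hc := congrArg (Nat.cast : ℕ → ℝ) h0
        rw [Nat.cast_mul, Nat.cast_mul, Nat.cast_sub (by omega : k - j - 1 ≤ n - m), eN] at hc
        have hs1 : ((k - j - 1 : ℕ) : ℝ) = (k : ℝ) - j - 1 := by
          rw [Nat.cast_sub (by omega : 1 ≤ k - j), e3]; push_cast; ring
        rw [hs1] at hc
        rw [e3] at hc
        linarith
      have cmpos : (0 : ℝ) < ((n - m).choose ((k - j) - 1) : ℝ) := by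
        exact_mod_cast Nat.choose_pos (by omega)
      unfold gf
      rw [hkj1, pow_succ]
      field_simp
      linear_combination (-((m : ℝ) - j)) * r2R
  have hdown : ((n : ℝ) - k - m + j) * ((j : ℝ) * gf n m k (j - 1))
      = -(j : ℝ) * (((k : ℝ) - j) + 1) * gf n m k j := by
    rcases Nat.eq_zero_or_pos j with hj0 | hjpos
    · rw [hj0]; simp
    · have hkj1 : k - (j - 1) = (k - j) + 1 := by omega
      have hpow : (-1 : ℝ) ^ (j - 1) = -(-1 : ℝ) ^ j := by
        have h' : j = (j - 1) + 1 := by omega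
        rw [h', pow_succ]
        simp
      unfold gf
      rw [hkj1, hpow]
      field_simp
      linear_combination r1R
  rw [e1, e2, e3, e4, e5]
  linear_combination hup + hdown

lemma innerSum (n k : ℕ) (X : Finset (Fin n) → ℝ) (B : Finset (Fin n)) (hB : B.card = k + 1) :
    ∑ A' : {A : Finset (Fin n) // A.card = k}, (if A'.1 ⊆ B then (1:ℝ) else 0) * X A'.1
      = ∑ b ∈ B, X (B.erase b) := by
  rw [← Finset.sum_subtype (Finset.univ.filter fun S : Finset (Fin n) => S.card = k)
      (by intro S; simp) (fun S => (if S ⊆ B then (1:ℝ) else 0) * X S)]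
  have h1 : ∀ S ∈ Finset.univ.filter (fun S : Finset (Fin n) => S.card = k),
      (if S ⊆ B then (1:ℝ) else 0) * X S = if S ⊆ B then X S else 0 := by
    intro S _; split <;> simp
  rw [Finset.sum_congr rfl h1, Finset.sum_ite, Finset.sum_const_zero, add_zero,
    Finset.filter_filter]
  refine (Finset.sum_bij (fun b _ => B.erase b) ?_ ?_ ?_ ?_).symm
  · intro b hb
    simp only [Finset.mem_filter, Finset.mem_univ, true_and]
    exact ⟨by rw [Finset.card_erase_of_mem hb, hB]; omega, Finset.erase_subset _ _⟩
  · intro b1 hb1 b2 hb2 he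
    by_contra hne
    have : b2 ∈ B.erase b1 := Finset.mem_erase.2 ⟨fun h => hne h.symm, hb2⟩
    rw [he] at this
    exact (Finset.notMem_erase b2 B) this
  · intro S hS
    simp only [Finset.mem_filter, Finset.mem_univ, true_and] at hS
    obtain ⟨hSk, hSB⟩ := hS
    have hcard : (B \ S).card = 1 := by
      rw [Finset.card_sdiff_of_subset hSB, hB, hSk]; omega
    obtain ⟨b, hb⟩ := Finset.card_eq_one.1 hcard
    have hbB : b ∈ B := by
      have : b ∈ B \ S := hb ▸ Finset.mem_singleton_self b
      exact (Finset.mem_sdiff.1 this).1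
    refine ⟨b, hbB, ?_⟩
    apply Finset.eq_of_subset_of_card_le
    · intro a ha
      rcases Finset.mem_erase.1 ha with ⟨hab, haB⟩
      by_contra haS
      have : a ∈ B \ S := Finset.mem_sdiff.2 ⟨haB, haS⟩
      rw [hb] at this
      exact hab (Finset.mem_singleton.1 this)
    · rw [Finset.card_erase_of_mem hbB, hB, hSk]; omega
  · intro b hb; rfl

lemma outerSum (n k : ℕ) (Y : Finset (Fin n) → ℝ) (A : Finset (Fin n)) (hA : A.card = k) :
    ∑ B : {B : Finset (Fin n) // B.card = k + 1}, (if A ⊆ B.1 then (1:ℝ) else 0) * Y B.1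
      = ∑ c ∈ Aᶜ, Y (insert c A) := by
  rw [← Finset.sum_subtype (Finset.univ.filter fun T : Finset (Fin n) => T.card = k + 1)
      (by intro T; simp) (fun T => (if A ⊆ T then (1:ℝ) else 0) * Y T)]
  have h1 : ∀ T ∈ Finset.univ.filter (fun T : Finset (Fin n) => T.card = k + 1),
      (if A ⊆ T then (1:ℝ) else 0) * Y T = if A ⊆ T then Y T else 0 := by
    intro T _; split <;> simp
  rw [Finset.sum_congr rfl h1, Finset.sum_ite, Finset.sum_const_zero, add_zero,
    Finset.filter_filter]
  refine (Finset.sum_bij (fun c _ => insert c A) ?_ ?_ ?_ ?_).symm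
  · intro c hc
    have hcA : c ∉ A := by simpa using hc
    simp only [Finset.mem_filter, Finset.mem_univ, true_and]
    exact ⟨by rw [Finset.card_insert_of_notMem hcA, hA], Finset.subset_insert _ _⟩
  · intro c1 hc1 c2 hc2 he
    have hc1A : c1 ∉ A := by simpa using hc1
    have : c1 ∈ insert c2 A := he ▸ Finset.mem_insert_self c1 A
    rcases Finset.mem_insert.1 this with h' | h'
    · exact h'
    · exact absurd h' hc1A
  · intro T hT
    simp only [Finset.mem_filter, Finset.mem_univ, true_and] at hT
    obtain ⟨hTk, hAT⟩ := hT
    have hcard : (T \ A).card = 1 := by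
      rw [Finset.card_sdiff_of_subset hAT, hTk, hA]; omega
    obtain ⟨c, hc⟩ := Finset.card_eq_one.1 hcard
    have hcT : c ∈ T ∧ c ∉ A := by
      have : c ∈ T \ A := hc ▸ Finset.mem_singleton_self c
      exact Finset.mem_sdiff.1 this
    refine ⟨c, by simpa using hcT.2, ?_⟩
    apply Finset.eq_of_subset_of_card_le
    · intro a ha
      rcases Finset.mem_insert.1 ha with h' | h'
      · exact h' ▸ hcT.1
      · exact hAT h'
    · rw [Finset.card_insert_of_notMem hcT.2, hTk, hA]
  · intro c hc; rfl

/-- For `n > 2k` and `V` of size `m ≤ k`, the vector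
`(x_V)_B = (-1)^{|B ∩ V|} / |{C : |C| = k, C ∩ V = B ∩ V}|` is an eigenvector of
`P_k P_kᵀ` with eigenvalue `(n-k-m)(k+1-m)`. -/
theorem stmt18 (n k m : ℕ) (h : 2 * k < n) (V : Finset (Fin n)) (hV : V.card = m)
    (hm : m ≤ k) (x : {A : Finset (Fin n) // A.card = k} → ℝ)
    (hx : ∀ B : {A : Finset (Fin n) // A.card = k},
      x B = (-1 : ℝ) ^ (B.1 ∩ V).card /
        ((Finset.univ.filter
            (fun C : Finset (Fin n) => C.card = k ∧ C ∩ V = B.1 ∩ V)).card : ℝ)) :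
    (Pincl n k * (Pincl n k)ᵀ).mulVec x = (((n - k - m) * (k + 1 - m) : ℕ) : ℝ) • x := by
  -- x in terms of gf
  have hxX : ∀ A' : {A : Finset (Fin n) // A.card = k},
      x A' = gf n m k ((A'.1 ∩ V).card) := by
    intro A'
    rw [hx A', countA n k V (A'.1 ∩ V) Finset.inter_subset_right
      (le_trans (Finset.card_le_card Finset.inter_subset_left) (le_of_eq A'.2)), hV]
    rfl
  funext A
  set j := (A.1 ∩ V).card with hjdef
  have hjm : j ≤ m := by
    rw [← hV]; exact Finset.card_le_card Finset.inter_subset_right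
  have hjk : j ≤ k := by
    rw [← A.2]; exact Finset.card_le_card Finset.inter_subset_left
  -- LHS rewriting
  have hL : (Pincl n k * (Pincl n k)ᵀ).mulVec x A
      = ∑ c ∈ A.1ᶜ, ∑ b ∈ insert c A.1,
          gf n m k (((insert c A.1).erase b ∩ V).card) := by
    rw [← Matrix.mulVec_mulVec]
    have hstep1 : ∀ B : {B : Finset (Fin n) // B.card = k + 1},
        ((Pincl n k)ᵀ.mulVec x) B
          = ∑ b ∈ B.1, gf n m k ((B.1.erase b ∩ V).card) := by
      intro B
      have hi := innerSum n k (fun S => gf n m k ((S ∩ V).card)) B.1 B.2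
      simp only [Matrix.mulVec, dotProduct, Matrix.transpose_apply, Pincl]
      rw [← hi]
      exact Finset.sum_congr rfl fun A' _ => by rw [hxX A']
    show ∑ B : {B : Finset (Fin n) // B.card = k + 1},
        Pincl n k A B * ((Pincl n k)ᵀ.mulVec x) B = _
    calc ∑ B : {B : Finset (Fin n) // B.card = k + 1},
          Pincl n k A B * ((Pincl n k)ᵀ.mulVec x) B
        = ∑ B : {B : Finset (Fin n) // B.card = k + 1},
            (if A.1 ⊆ B.1 then (1:ℝ) else 0)
              * (∑ b ∈ B.1, gf n m k ((B.1.erase b ∩ V).card)) := by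
          exact Finset.sum_congr rfl fun B _ => by rw [hstep1 B]; rfl
      _ = ∑ c ∈ A.1ᶜ, ∑ b ∈ insert c A.1,
            gf n m k (((insert c A.1).erase b ∩ V).card) :=
          outerSum n k (fun T => ∑ b ∈ T, gf n m k ((T.erase b ∩ V).card)) A.1 A.2
  rw [hL]
  -- expand the inner sums
  have hstep3 : ∀ c ∈ A.1ᶜ, ∑ b ∈ insert c A.1,
      gf n m k (((insert c A.1).erase b ∩ V).card)
      = gf n m k j + ∑ b ∈ A.1, gf n m k ((insert c (A.1.erase b) ∩ V).card) := by
    intro c hc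
    have hcA : c ∉ A.1 := by simpa using hc
    rw [Finset.sum_insert hcA, Finset.erase_insert hcA]
    congr 1
    refine Finset.sum_congr rfl fun b hb => ?_
    have hbc : c ≠ b := fun h' => hcA (h' ▸ hb)
    rw [Finset.erase_insert_of_ne hbc]
  rw [Finset.sum_congr rfl hstep3, Finset.sum_add_distrib, Finset.sum_const]
  have hcardc : A.1ᶜ.card = n - k := by
    rw [Finset.card_compl, Fintype.card_fin, A.2]
  -- pointwise values of the inner terms
  have hval : ∀ c ∈ A.1ᶜ, ∀ b ∈ A.1,
      gf n m k ((insert c (A.1.erase b) ∩ V).card)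
        = if c ∈ V then (if b ∈ V then gf n m k j else gf n m k (j + 1))
          else (if b ∈ V then gf n m k (j - 1) else gf n m k j) := by
    intro c hc b hb
    have hcA : c ∉ A.1 := by simpa using hc
    have hcAV : c ∉ (A.1 ∩ V).erase b := fun h' =>
      hcA (Finset.mem_of_mem_inter_left (Finset.mem_of_mem_erase h'))
    have herase : A.1.erase b ∩ V = (A.1 ∩ V).erase b := by
      ext a
      simp only [Finset.mem_inter, Finset.mem_erase]
      tauto
    by_cases hcV : c ∈ V
    · rw [if_pos hcV, Finset.insert_inter_of_mem hcV, herase]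
      by_cases hbV : b ∈ V
      · rw [if_pos hbV]
        have hbAV : b ∈ A.1 ∩ V := Finset.mem_inter.2 ⟨hb, hbV⟩
        have hj1 : 1 ≤ j := by
          rw [hjdef]; exact Finset.card_pos.2 ⟨b, hbAV⟩
        rw [Finset.card_insert_of_notMem hcAV, Finset.card_erase_of_mem hbAV, ← hjdef]
        congr 1
        omega
      · rw [if_neg hbV]
        have hbAV : b ∉ A.1 ∩ V := fun h' => hbV (Finset.mem_of_mem_inter_right h')
        rw [Finset.erase_eq_of_notMem hbAV,
          Finset.card_insert_of_notMem (fun h' => hcA (Finset.mem_of_mem_inter_left h')),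
          ← hjdef]
    · rw [if_neg hcV, Finset.insert_inter_of_notMem hcV, herase]
      by_cases hbV : b ∈ V
      · rw [if_pos hbV]
        have hbAV : b ∈ A.1 ∩ V := Finset.mem_inter.2 ⟨hb, hbV⟩
        rw [Finset.card_erase_of_mem hbAV, ← hjdef]
      · rw [if_neg hbV]
        have hbAV : b ∉ A.1 ∩ V := fun h' => hbV (Finset.mem_of_mem_inter_right h')
        rw [Finset.erase_eq_of_notMem hbAV, ← hjdef]
  -- card facts
  have hbin : (A.1.filter (· ∈ V)).card = j := by
    have heq : A.1.filter (· ∈ V) = A.1 ∩ V := by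
      ext a; simp only [Finset.mem_filter, Finset.mem_inter]
    rw [heq]
  have hbout : (A.1.filter (fun b => ¬ b ∈ V)).card = k - j := by
    have := Finset.card_filter_add_card_filter_not (s := A.1) (p := (· ∈ V))
    rw [A.2] at this
    omega
  have hcin : (A.1ᶜ.filter (· ∈ V)).card = m - j := by
    have heq : A.1ᶜ.filter (· ∈ V) = V \ A.1 := by
      ext a
      simp only [Finset.mem_filter, Finset.mem_compl, Finset.mem_sdiff]
      tauto
    have h2 : (V \ A.1).card + (V ∩ A.1).card = V.card :=
      Finset.card_sdiff_add_card_inter V A.1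
    have h3 : (V ∩ A.1).card = j := by rw [Finset.inter_comm, ← hjdef]
    rw [heq]
    omega
  have hcout : (A.1ᶜ.filter (fun c => ¬ c ∈ V)).card = (n - k) - (m - j) := by
    have := Finset.card_filter_add_card_filter_not (s := A.1ᶜ) (p := (· ∈ V))
    rw [hcardc] at this
    omega
  -- evaluate inner sums
  have hinner : ∀ c ∈ A.1ᶜ,
      ∑ b ∈ A.1, gf n m k ((insert c (A.1.erase b) ∩ V).card)
        = if c ∈ V then (j : ℝ) * gf n m k j + ((k - j : ℕ) : ℝ) * gf n m k (j + 1)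
          else (j : ℝ) * gf n m k (j - 1) + ((k - j : ℕ) : ℝ) * gf n m k j := by
    intro c hc
    rw [Finset.sum_congr rfl (fun b hb => hval c hc b hb)]
    by_cases hcV : c ∈ V
    · simp only [if_pos hcV]
      rw [← Finset.sum_filter_add_sum_filter_not A.1 (· ∈ V)]
      rw [Finset.sum_congr rfl (fun b hb => if_pos (Finset.mem_filter.1 hb).2),
        Finset.sum_congr rfl (fun b hb => if_neg (Finset.mem_filter.1 hb).2),
        Finset.sum_const, Finset.sum_const, hbin, hbout, nsmul_eq_mul, nsmul_eq_mul]
    · simp only [if_neg hcV]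
      rw [← Finset.sum_filter_add_sum_filter_not A.1 (· ∈ V)]
      rw [Finset.sum_congr rfl (fun b hb => if_pos (Finset.mem_filter.1 hb).2),
        Finset.sum_congr rfl (fun b hb => if_neg (Finset.mem_filter.1 hb).2),
        Finset.sum_const, Finset.sum_const, hbin, hbout, nsmul_eq_mul, nsmul_eq_mul]
  rw [Finset.sum_congr rfl hinner]
  rw [← Finset.sum_filter_add_sum_filter_not A.1ᶜ (· ∈ V)]
  rw [Finset.sum_congr rfl (fun c hc => if_pos (Finset.mem_filter.1 hc).2),
    Finset.sum_congr rfl (fun c hc => if_neg (Finset.mem_filter.1 hc).2),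
    Finset.sum_const, Finset.sum_const, hcin, hcout, hcardc,
    nsmul_eq_mul, nsmul_eq_mul, nsmul_eq_mul]
  -- RHS
  have hR : ((((n - k - m) * (k + 1 - m) : ℕ) : ℝ) • x) A
      = (((n - k - m) * (k + 1 - m) : ℕ) : ℝ) * gf n m k j := by
    rw [Pi.smul_apply, smul_eq_mul, hxX A]
  rw [hR]
  have := keyId n m k j h hm hjm
  linarith [this]
end

section
/- Averaging over random permutations: for any functions $f, g : \mathcal{P}(U) \to \mathbb{R}$ on subsets of a finite set $U$ with $|U| = n$, $\mathbb{E}_{\sigma}[(f \cdot \sigma(g))^2] = \sum_{k, u_1, u_2 \ge 0} \frac{k!\, u_1!\, u_2!\, (n - k - u_1 - u_2)!}{n!}\, s_{k,u_1,u_2}(f,f)\, s_{k,u_1,u_2}(g,g)$, where the expectation is uniform over all permutations $\sigma$ of $U$, $\sigma(g)(C) = g(\sigma^{-1}(C))$, $f \cdot g = 2^{-n}\sum_C f(C)g(C)$, and $s_{k,u_1,u_2}(g_1,g_2) = \sum_{A,B,C\ \text{pairwise disjoint},\ |A|=k,\ |B|=u_1,\ |C|=u_2} \hat{g_1}_{A\cup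 B}\hat{g_2}_{A\cup C}$. -/
open Finset
open scoped symmDiff

section Aux
variable {U : Type*} [Fintype U] [DecidableEq U] {K : Type*} [Fintype K] [DecidableEq K]

section glue
variable (c c' : U → K)

def glueFun (e : ∀ k, {x // c' x = k} ≃ {x // c x = k}) : U → U :=
  fun x => (e (c' x) ⟨x, rfl⟩).val

def glueInv (e : ∀ k, {x // c' x = k} ≃ {x // c x = k}) : U → U :=
  fun y => ((e (c y)).symm ⟨y, rfl⟩).val

lemma glueFun_eq (e : ∀ k, {x // c' x = k} ≃ {x // c x = k}) (x : U) (k : K) (hx : c' x = k) :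
    glueFun c c' e x = (e k ⟨x, hx⟩).val := by subst hx; rfl

lemma glueInv_eq (e : ∀ k, {x // c' x = k} ≃ {x // c x = k}) (y : U) (k : K) (hy : c y = k) :
    glueInv c c' e y = ((e k).symm ⟨y, hy⟩).val := by subst hy; rfl

def glue (e : ∀ k, {x // c' x = k} ≃ {x // c x = k}) : Equiv.Perm U where
  toFun := glueFun c c' e
  invFun := glueInv c c' e
  left_inv := by
    intro x
    have hy : c (glueFun c c' e x) = c' x := (e (c' x) ⟨x, rfl⟩).prop
    rw [glueInv_eq c c' e _ _ hy]
    have : (⟨glueFun c c' e x, hy⟩ : {y // c y = c' x}) = e (c' x) ⟨x, rfl⟩ :=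
      Subtype.ext rfl
    rw [this, Equiv.symm_apply_apply]
  right_inv := by
    intro y
    have hx : c' (glueInv c c' e y) = c y := ((e (c y)).symm ⟨y, rfl⟩).prop
    rw [glueFun_eq c c' e _ _ hx]
    have : (⟨glueInv c c' e y, hx⟩ : {x // c' x = c y}) = (e (c y)).symm ⟨y, rfl⟩ :=
      Subtype.ext rfl
    rw [this, Equiv.apply_symm_apply]

lemma glue_prop (e : ∀ k, {x // c' x = k} ≃ {x // c x = k}) (x : U) :
    c (glue c c' e x) = c' x := (e (c' x) ⟨x, rfl⟩).prop

def permColorEquiv :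
    {σ : Equiv.Perm U // ∀ x, c (σ x) = c' x} ≃ (∀ k, {x // c' x = k} ≃ {x // c x = k}) where
  toFun σ k := Equiv.subtypeEquiv σ.val (fun x => by rw [σ.prop x])
  invFun e := ⟨glue c c' e, glue_prop c c' e⟩
  left_inv σ := by
    apply Subtype.ext
    apply Equiv.ext
    intro x
    rfl
  right_inv e := by
    funext k
    apply Equiv.ext
    intro x
    apply Subtype.ext
    exact glueFun_eq c c' e x k x.prop

lemma card_perm_color
    (h : ∀ k, (univ.filter fun x => c x = k).card = (univ.filter fun x => c' x = k).card) :
    (univ.filter fun σ : Equiv.Perm U => ∀ x, c (σ x) = c' x).card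
      = ∏ k, Nat.factorial ((univ.filter fun x => c' x = k).card) := by
  rw [← Fintype.card_subtype]
  rw [Fintype.card_congr (permColorEquiv c c')]
  rw [Fintype.card_pi]
  refine Finset.prod_congr rfl fun k _ => ?_
  have e : {x // c' x = k} ≃ {x // c x = k} := by
    apply Fintype.equivOfCardEq
    rw [Fintype.card_subtype, Fintype.card_subtype, h]
  rw [Fintype.card_equiv e, Fintype.card_subtype]

lemma card_perm_color_zero
    (k : K) (h : (univ.filter fun x => c x = k).card ≠ (univ.filter fun x => c' x = k).card) :
    (univ.filter fun σ : Equiv.Perm U => ∀ x, c (σ x) = c' x).card = 0 := by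
  rw [Finset.card_eq_zero, Finset.filter_eq_empty_iff]
  intro σ _ hσ
  apply h
  rw [← Fintype.card_subtype, ← Fintype.card_subtype]
  exact Fintype.card_congr ((Equiv.subtypeEquiv σ (fun x => by rw [hσ x])).symm)

end glue
end Aux

section Aux2
variable {U : Type*} [Fintype U] [DecidableEq U]

def col (V W : Finset U) : U → Bool × Bool := fun x => (decide (x ∈ V), decide (x ∈ W))

lemma fiber_tt (V W : Finset U) : univ.filter (fun x => col V W x = (true, true)) = V ∩ W := by
  ext x; simp [col, Prod.ext_iff]
lemma fiber_tf (V W : Finset U) : univ.filter (fun x => col V W x = (true, false)) = V \ W := by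
  ext x; simp [col, Prod.ext_iff]
lemma fiber_ft (V W : Finset U) : univ.filter (fun x => col V W x = (false, true)) = W \ V := by
  ext x; simp [col, Prod.ext_iff, and_comm]
lemma fiber_ff (V W : Finset U) : univ.filter (fun x => col V W x = (false, false)) = (V ∪ W)ᶜ := by
  ext x; simp [col, Prod.ext_iff]
lemma card_union_decomp (V W : Finset U) :
    (V ∪ W).card = (V ∩ W).card + (V \ W).card + (W \ V).card := by
  have h1 := Finset.card_inter_add_card_sdiff V W
  have h2 := Finset.card_inter_add_card_sdiff W V
  have h3 := Finset.card_inter_add_card_union V W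
  have h4 : (W ∩ V).card = (V ∩ W).card := by rw [Finset.inter_comm]
  omega

lemma mem_image_inv (σ : Equiv.Perm U) (V : Finset U) (x : U) :
    x ∈ V.image ⇑σ⁻¹ ↔ σ x ∈ V := by
  rw [Finset.mem_image]
  constructor
  · rintro ⟨y, hy, rfl⟩; simpa using hy
  · intro h; exact ⟨σ x, h, by simp⟩

lemma fiber_cond_iff (σ : Equiv.Perm U) (V W V' W' : Finset U) :
    (V.image ⇑σ⁻¹ = V' ∧ W.image ⇑σ⁻¹ = W') ↔ ∀ x, col V W (σ x) = col V' W' x := by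
  simp only [Finset.ext_iff, mem_image_inv, col, Prod.ext_iff, decide_eq_decide, ← forall_and]

lemma card_fiber_s19 (V W V' W' : Finset U)
    (h1 : (V' ∩ W').card = (V ∩ W).card) (h2 : (V' \ W').card = (V \ W).card)
    (h3 : (W' \ V').card = (W \ V).card) :
    (univ.filter fun σ : Equiv.Perm U => V.image ⇑σ⁻¹ = V' ∧ W.image ⇑σ⁻¹ = W').card
      = Nat.factorial ((V ∩ W).card) * Nat.factorial ((V \ W).card) *
        Nat.factorial ((W \ V).card) *
        Nat.factorial (Fintype.card U - (V ∩ W).card - (V \ W).card - (W \ V).card) := by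
  have hcompl : ((V' ∪ W')ᶜ : Finset U).card = ((V ∪ W)ᶜ : Finset U).card := by
    rw [Finset.card_compl, Finset.card_compl, card_union_decomp, card_union_decomp, h1, h2, h3]
  have hfib : ∀ k : Bool × Bool,
      (univ.filter fun x => col V W x = k).card = (univ.filter fun x => col V' W' x = k).card := by
    rintro ⟨b1, b2⟩
    cases b1 <;> cases b2 <;>
      simp only [fiber_tt, fiber_tf, fiber_ft, fiber_ff, h1, h2, h3, hcompl]
  have := card_perm_color (col V W) (col V' W') hfib
  calc (univ.filter fun σ : Equiv.Perm U => V.image ⇑σ⁻¹ = V' ∧ W.image ⇑σ⁻¹ = W').card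
      = (univ.filter fun σ : Equiv.Perm U => ∀ x, col V W (σ x) = col V' W' x).card := by
        congr 1; apply Finset.filter_congr; intro σ _; exact fiber_cond_iff σ V W V' W'
    _ = ∏ k : Bool × Bool, Nat.factorial ((univ.filter fun x => col V' W' x = k).card) := this
    _ = _ := by
        rw [Fintype.prod_prod_type]
        rw [Fintype.prod_bool]
        rw [Fintype.prod_bool, Fintype.prod_bool]
        rw [fiber_tt, fiber_tf, fiber_ft, fiber_ff, h1, h2, h3, hcompl,
          Finset.card_compl, card_union_decomp]
        have : Fintype.card U - ((V ∩ W).card + (V \ W).card + (W \ V).card)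
            = Fintype.card U - (V ∩ W).card - (V \ W).card - (W \ V).card := by omega
        rw [this]; ring

lemma card_fiber_zero (V W V' W' : Finset U)
    (h : ¬((V' ∩ W').card = (V ∩ W).card ∧ (V' \ W').card = (V \ W).card ∧
        (W' \ V').card = (W \ V).card)) :
    (univ.filter fun σ : Equiv.Perm U => V.image ⇑σ⁻¹ = V' ∧ W.image ⇑σ⁻¹ = W').card = 0 := by
  rw [Finset.card_eq_zero, Finset.filter_eq_empty_iff]
  rintro σ - ⟨hV, hW⟩
  apply h
  have hinj : Function.Injective ⇑(σ⁻¹ : Equiv.Perm U) := Equiv.injective _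
  subst hV hW
  refine ⟨?_, ?_, ?_⟩
  · rw [← Finset.image_inter _ _ hinj, Finset.card_image_of_injective _ hinj]
  · rw [← Finset.image_sdiff _ _ hinj, Finset.card_image_of_injective _ hinj]
  · rw [← Finset.image_sdiff _ _ hinj, Finset.card_image_of_injective _ hinj]

lemma perm_sum (V W : Finset U) (F : Finset U → Finset U → ℝ) :
    ∑ σ : Equiv.Perm U, F (V.image ⇑σ⁻¹) (W.image ⇑σ⁻¹)
      = ((Nat.factorial ((V ∩ W).card) * Nat.factorial ((V \ W).card) *
          Nat.factorial ((W \ V).card) *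
          Nat.factorial (Fintype.card U - (V ∩ W).card - (V \ W).card - (W \ V).card) : ℕ) : ℝ) *
        ∑ V' : Finset U, ∑ W' : Finset U,
          if (V' ∩ W').card = (V ∩ W).card ∧ (V' \ W').card = (V \ W).card ∧
              (W' \ V').card = (W \ V).card then F V' W' else 0 := by
  have step1 : ∀ σ : Equiv.Perm U, F (V.image ⇑σ⁻¹) (W.image ⇑σ⁻¹)
      = ∑ V' : Finset U, ∑ W' : Finset U,
          if V.image ⇑σ⁻¹ = V' ∧ W.image ⇑σ⁻¹ = W' then F V' W' else 0 := by
    intro σ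
    simp [ite_and, Finset.sum_ite_eq]
  rw [Finset.sum_congr rfl (fun σ _ => step1 σ)]
  rw [Finset.sum_comm]
  rw [Finset.mul_sum]
  refine Finset.sum_congr rfl fun V' _ => ?_
  rw [Finset.sum_comm, Finset.mul_sum]
  refine Finset.sum_congr rfl fun W' _ => ?_
  rw [Finset.sum_ite, Finset.sum_const, Finset.sum_const_zero, add_zero, nsmul_eq_mul]
  by_cases h : (V' ∩ W').card = (V ∩ W).card ∧ (V' \ W').card = (V \ W).card ∧
      (W' \ V').card = (W \ V).card
  · obtain ⟨h1, h2, h3⟩ := h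
    rw [card_fiber_s19 V W V' W' h1 h2 h3, if_pos ⟨h1, h2, h3⟩]
  · rw [card_fiber_zero V W V' W' h, if_neg h]
    simp

lemma sum_eV (S : Finset U) :
    ∑ V : Finset U, ((-1 : ℝ)) ^ (V ∩ S).card
      = if S = ∅ then (2 : ℝ) ^ Fintype.card U else 0 := by
  have h1 : ∀ V : Finset U, ((-1 : ℝ)) ^ (V ∩ S).card
      = ∏ x ∈ V, (if x ∈ S then (-1 : ℝ) else 1) := by
    intro V
    rw [Finset.prod_ite, Finset.prod_const, Finset.prod_const, one_pow, mul_one,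
      Finset.filter_mem_eq_inter]
  rw [Finset.sum_congr rfl fun V _ => h1 V]
  have h2 : ∑ V : Finset U, ∏ x ∈ V, (if x ∈ S then (-1 : ℝ) else 1)
      = ∏ x ∈ (univ : Finset U), ((if x ∈ S then (-1 : ℝ) else 1) + 1) := by
    rw [Finset.prod_add]
    rw [← Finset.powerset_univ]
    refine (Finset.sum_congr rfl fun t _ => ?_).symm
    rw [Finset.prod_const, one_pow, mul_one]
  rw [h2]
  have h3 : ∀ x : U, ((if x ∈ S then (-1 : ℝ) else 1) + 1) = if x ∈ S then 0 else 2 := by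
    intro x; split_ifs <;> norm_num
  rw [Finset.prod_congr rfl fun x _ => h3 x]
  by_cases hS : S = ∅
  · subst hS
    simp [Finset.prod_const, Finset.card_univ]
  · rw [if_neg hS]
    obtain ⟨x, hx⟩ := Finset.nonempty_iff_ne_empty.2 hS
    exact Finset.prod_eq_zero (Finset.mem_univ x) (by simp [hx])

lemma card_symmDiff_aux (X Y : Finset U) :
    X.card + Y.card = (X ∆ Y).card + 2 * (X ∩ Y).card := by
  have h1 : (X ∆ Y) ∪ (X ∩ Y) = X ∪ Y := by
    simpa [Finset.sup_eq_union, Finset.inf_eq_inter] using symmDiff_sup_inf (a := X) (b := Y)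
  have h2 : Disjoint (X ∆ Y) (X ∩ Y) := by
    simpa [Finset.inf_eq_inter] using disjoint_symmDiff_inf (a := X) (b := Y)
  have h3 := Finset.card_union_of_disjoint h2
  rw [h1] at h3
  have h4 := Finset.card_inter_add_card_union X Y
  omega

lemma eV_mul (V C D : Finset U) :
    eV V C * eV V D = (-1 : ℝ) ^ (V ∩ (C ∆ D)).card := by
  unfold eV
  rw [← pow_add]
  have hsd : (V ∩ C) ∆ (V ∩ D) = V ∩ (C ∆ D) := (inf_symmDiff_distrib_left V C D).symm
  have hc := card_symmDiff_aux (V ∩ C) (V ∩ D)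
  rw [hsd] at hc
  rw [hc, pow_add, pow_mul, neg_one_sq, one_pow, mul_one]

lemma sum_eV_mul (C D : Finset U) :
    ∑ V : Finset U, eV V C * eV V D = if C = D then (2 : ℝ) ^ Fintype.card U else 0 := by
  rw [Finset.sum_congr rfl fun V _ => eV_mul V C D, sum_eV]
  simp

lemma parseval (f h : Finset U → ℝ) : ip f h = ∑ V : Finset U, hatC f V * hatC h V := by
  have expand : ∀ V : Finset U, hatC f V * hatC h V
      = ((2 : ℝ) ^ Fintype.card U)⁻¹ * ((2 : ℝ) ^ Fintype.card U)⁻¹ *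
        ∑ C : Finset U, ∑ D : Finset U, (f C * h D) * (eV V C * eV V D) := by
    intro V
    unfold hatC ip
    rw [mul_mul_mul_comm, Finset.sum_mul_sum]
    congr 1
    exact Finset.sum_congr rfl fun C _ => Finset.sum_congr rfl fun D _ => by ring
  rw [Finset.sum_congr rfl fun V _ => expand V, ← Finset.mul_sum]
  rw [Finset.sum_comm]
  have swap2 : ∀ C : Finset U, ∑ V : Finset U, ∑ D : Finset U, (f C * h D) * (eV V C * eV V D)
      = ∑ D : Finset U, (f C * h D) * ∑ V : Finset U, (eV V C * eV V D) := by
    intro C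
    rw [Finset.sum_comm]
    exact Finset.sum_congr rfl fun D _ => by rw [Finset.mul_sum]
  rw [Finset.sum_congr rfl fun C _ => swap2 C]
  have inner : ∀ C : Finset U, ∑ D : Finset U, (f C * h D) * ∑ V : Finset U, (eV V C * eV V D)
      = f C * h C * (2 : ℝ) ^ Fintype.card U := by
    intro C
    rw [Finset.sum_congr rfl fun D _ => by rw [sum_eV_mul C D]]
    simp only [mul_ite, mul_zero]
    simp [Finset.sum_ite_eq]
  rw [Finset.sum_congr rfl fun C _ => inner C]
  unfold ip
  rw [← Finset.sum_mul]
  have hc : ((2:ℝ) ^ Fintype.card U) ≠ 0 := by positivity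
  field_simp

lemma mem_image_inv' (σ : Equiv.Perm U) (V : Finset U) (x : U) :
    x ∈ V.image ⇑σ⁻¹ ↔ σ x ∈ V := by
  rw [Finset.mem_image]
  constructor
  · rintro ⟨y, hy, rfl⟩; simpa using hy
  · intro h; exact ⟨σ x, h, by simp⟩

lemma hatC_perm (g : Finset U → ℝ) (σ : Equiv.Perm U) (V : Finset U) :
    hatC (fun C => g (C.image ⇑σ⁻¹)) V = hatC g (V.image ⇑σ⁻¹) := by
  unfold hatC ip
  congr 1
  have hinj : Function.Injective ⇑(σ⁻¹ : Equiv.Perm U) := Equiv.injective _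
  have key : ∀ C : Finset U, eV (V.image ⇑σ⁻¹) (C.image ⇑σ⁻¹) = eV V C := by
    intro C
    unfold eV
    rw [← Finset.image_inter _ _ hinj, Finset.card_image_of_injective _ hinj]
  have hbij : Function.Bijective (fun C : Finset U => C.image ⇑σ⁻¹) := by
    constructor
    · exact Finset.image_injective hinj
    · intro D
      refine ⟨D.image ⇑σ, ?_⟩
      show (D.image ⇑σ).image ⇑σ⁻¹ = D
      rw [Finset.image_image]
      have hcomp : ⇑σ⁻¹ ∘ ⇑σ = id := by funext x; simp
      rw [hcomp, Finset.image_id]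
  calc ∑ C : Finset U, g (C.image ⇑σ⁻¹) * eV V C
      = ∑ C : Finset U, g (C.image ⇑σ⁻¹) * eV (V.image ⇑σ⁻¹) (C.image ⇑σ⁻¹) :=
        Finset.sum_congr rfl fun C _ => by rw [key]
    _ = ∑ D : Finset U, g D * eV (V.image ⇑σ⁻¹) D :=
        Fintype.sum_bijective _ hbij _ _ (fun C => rfl)

lemma interU (A B₁ C : Finset U) (h2 : Disjoint A B₁) (h3 : Disjoint A C) (h4 : Disjoint B₁ C) :
    (A ∪ B₁) ∩ (A ∪ C) = A := by
  ext x
  simp only [Finset.mem_inter, Finset.mem_union]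
  have := Finset.disjoint_left.1 h4
  tauto

lemma sdiffU (A B₁ C : Finset U) (h2 : Disjoint A B₁) (h3 : Disjoint A C) (h4 : Disjoint B₁ C) :
    (A ∪ B₁) \ (A ∪ C) = B₁ := by
  ext x
  simp only [Finset.mem_sdiff, Finset.mem_union]
  have ha := Finset.disjoint_left.1 h2
  have hb := Finset.disjoint_left.1 h4
  tauto

lemma inter_union_sdiff' (V W : Finset U) : V ∩ W ∪ V \ W = V := by
  rw [Finset.union_comm, Finset.sdiff_union_inter]

lemma sK_eq (g₁ g₂ : Finset U → ℝ) (k u₁ u₂ : ℕ) :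
    (∑ V : Finset U, ∑ W : Finset U,
        if (V ∩ W).card = k ∧ (V \ W).card = u₁ ∧ (W \ V).card = u₂ then
          hatC g₁ V * hatC g₂ W else 0)
      = sK g₁ g₂ k u₁ u₂ := by
  have L : (∑ V : Finset U, ∑ W : Finset U,
      if (V ∩ W).card = k ∧ (V \ W).card = u₁ ∧ (W \ V).card = u₂ then
        hatC g₁ V * hatC g₂ W else 0)
      = ∑ p ∈ ((univ ×ˢ univ : Finset (Finset U × Finset U)).filter
          (fun p => (p.1 ∩ p.2).card = k ∧ (p.1 \ p.2).card = u₁ ∧ (p.2 \ p.1).card = u₂)),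
          hatC g₁ p.1 * hatC g₂ p.2 := by
    rw [Finset.sum_filter, Finset.sum_product]
  have R : sK g₁ g₂ k u₁ u₂
      = ∑ t ∈ (((univ ×ˢ univ) ×ˢ univ : Finset ((Finset U × Finset U) × Finset U)).filter
          (fun t => t.1.1.card = k ∧ t.1.2.card = u₁ ∧ t.2.card = u₂ ∧
            Disjoint t.1.1 t.1.2 ∧ Disjoint t.1.1 t.2 ∧ Disjoint t.1.2 t.2)),
          hatC g₁ (t.1.1 ∪ t.1.2) * hatC g₂ (t.1.1 ∪ t.2) := by
    unfold sK sSet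
    rw [Finset.sum_filter, Finset.sum_filter, Finset.sum_product, Finset.sum_product]
    refine Finset.sum_congr rfl fun A _ => ?_
    by_cases hA : A.card = k
    · rw [if_pos hA]
      refine Finset.sum_congr rfl fun B₁ _ => Finset.sum_congr rfl fun C _ => ?_
      simp only [hA, true_and]
    · rw [if_neg hA]
      symm
      refine Finset.sum_eq_zero fun B₁ _ => Finset.sum_eq_zero fun C _ => ?_
      rw [if_neg]; rintro ⟨h, -⟩; exact hA h
  rw [L, R]
  refine Finset.sum_nbij' (fun p => ((p.1 ∩ p.2, p.1 \ p.2), p.2 \ p.1))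
    (fun t => (t.1.1 ∪ t.1.2, t.1.1 ∪ t.2)) ?_ ?_ ?_ ?_ ?_
  · rintro ⟨V, W⟩ hp
    simp only [Finset.mem_filter, Finset.mem_product] at hp ⊢
    obtain ⟨-, h1, h2, h3⟩ := hp
    refine ⟨⟨⟨Finset.mem_univ _, Finset.mem_univ _⟩, Finset.mem_univ _⟩, h1, h2, h3, ?_, ?_, ?_⟩ <;>
      · rw [Finset.disjoint_left]; intro x hx hy
        simp only [Finset.mem_inter, Finset.mem_sdiff] at hx hy; tauto
  · rintro ⟨⟨A, B₁⟩, C⟩ ht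
    simp only [Finset.mem_filter, Finset.mem_product] at ht ⊢
    obtain ⟨-, h1, h2, h3, h4, h5, h6⟩ := ht
    rw [interU A B₁ C h4 h5 h6, sdiffU A B₁ C h4 h5 h6, sdiffU A C B₁ h5 h4 h6.symm]
    exact ⟨⟨Finset.mem_univ _, Finset.mem_univ _⟩, h1, h2, h3⟩
  · rintro ⟨V, W⟩ hp
    simp only [Prod.mk.injEq]
    exact ⟨inter_union_sdiff' V W, by rw [Finset.inter_comm]; exact inter_union_sdiff' W V⟩
  · rintro ⟨⟨A, B₁⟩, C⟩ ht
    simp only [Finset.mem_filter, Finset.mem_product] at ht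
    obtain ⟨-, h1, h2, h3, h4, h5, h6⟩ := ht
    simp only [Prod.mk.injEq]
    exact ⟨⟨interU A B₁ C h4 h5 h6, sdiffU A B₁ C h4 h5 h6⟩, sdiffU A C B₁ h5 h4 h6.symm⟩
  · rintro ⟨V, W⟩ hp
    simp only
    rw [inter_union_sdiff' V W, Finset.inter_comm, inter_union_sdiff' W V]

lemma sK_zero (g₁ g₂ : Finset U → ℝ) (k u₁ u₂ : ℕ) (h : ¬(k + u₁ + u₂ ≤ Fintype.card U)) :
    sK g₁ g₂ k u₁ u₂ = 0 := by
  unfold sK sSet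
  refine Finset.sum_eq_zero fun A hA => ?_
  rw [Finset.mem_filter] at hA
  refine Finset.sum_eq_zero fun B₁ _ => Finset.sum_eq_zero fun C _ => ?_
  rw [if_neg]
  rintro ⟨h1, h2, h3, h4, h5⟩
  apply h
  have hcard : (A ∪ B₁ ∪ C).card = k + u₁ + u₂ := by
    rw [Finset.card_union_of_disjoint, Finset.card_union_of_disjoint h3, hA.2, h1, h2]
    rw [Finset.disjoint_union_left]
    exact ⟨h4, h5⟩
  calc k + u₁ + u₂ = (A ∪ B₁ ∪ C).card := hcard.symm
    _ ≤ Fintype.card U := by simpa using Finset.card_le_univ _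

end Aux2



section Main
variable {U : Type*} [Fintype U] [DecidableEq U]

lemma swap_uVW (r : Finset ℕ) (H : ℕ → Finset U → Finset U → ℝ) :
    ∑ u ∈ r, ∑ V : Finset U, ∑ W : Finset U, H u V W
      = ∑ V : Finset U, ∑ W : Finset U, ∑ u ∈ r, H u V W := by
  rw [Finset.sum_comm]
  exact Finset.sum_congr rfl fun V _ => Finset.sum_comm

lemma swap_uuVW (r : Finset ℕ) (H : ℕ → ℕ → Finset U → Finset U → ℝ) :
    ∑ u₁ ∈ r, ∑ u₂ ∈ r, ∑ V : Finset U, ∑ W : Finset U, H u₁ u₂ V W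
      = ∑ V : Finset U, ∑ W : Finset U, ∑ u₁ ∈ r, ∑ u₂ ∈ r, H u₁ u₂ V W := by
  calc ∑ u₁ ∈ r, ∑ u₂ ∈ r, ∑ V : Finset U, ∑ W : Finset U, H u₁ u₂ V W
      = ∑ u₁ ∈ r, ∑ V : Finset U, ∑ W : Finset U, ∑ u₂ ∈ r, H u₁ u₂ V W :=
        Finset.sum_congr rfl fun u₁ _ => swap_uVW r (H u₁)
    _ = ∑ V : Finset U, ∑ u₁ ∈ r, ∑ W : Finset U, ∑ u₂ ∈ r, H u₁ u₂ V W := Finset.sum_comm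
    _ = ∑ V : Finset U, ∑ W : Finset U, ∑ u₁ ∈ r, ∑ u₂ ∈ r, H u₁ u₂ V W :=
        Finset.sum_congr rfl fun V _ => Finset.sum_comm

lemma swap32 (r : Finset ℕ) (G : ℕ → ℕ → ℕ → Finset U → Finset U → ℝ) :
    ∑ k ∈ r, ∑ u₁ ∈ r, ∑ u₂ ∈ r, ∑ V : Finset U, ∑ W : Finset U, G k u₁ u₂ V W
      = ∑ V : Finset U, ∑ W : Finset U, ∑ k ∈ r, ∑ u₁ ∈ r, ∑ u₂ ∈ r, G k u₁ u₂ V W := by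
  calc ∑ k ∈ r, ∑ u₁ ∈ r, ∑ u₂ ∈ r, ∑ V : Finset U, ∑ W : Finset U, G k u₁ u₂ V W
      = ∑ k ∈ r, ∑ V : Finset U, ∑ W : Finset U, ∑ u₁ ∈ r, ∑ u₂ ∈ r, G k u₁ u₂ V W :=
        Finset.sum_congr rfl fun k _ => swap_uuVW r (G k)
    _ = ∑ V : Finset U, ∑ k ∈ r, ∑ W : Finset U, ∑ u₁ ∈ r, ∑ u₂ ∈ r, G k u₁ u₂ V W :=
        Finset.sum_comm
    _ = ∑ V : Finset U, ∑ W : Finset U, ∑ k ∈ r, ∑ u₁ ∈ r, ∑ u₂ ∈ r, G k u₁ u₂ V W :=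
        Finset.sum_congr rfl fun V _ => Finset.sum_comm

lemma select (n a b c : ℕ) (ha : a ≤ n) (hb : b ≤ n) (hc : c ≤ n) (X : ℕ → ℕ → ℕ → ℝ) :
    (∑ k ∈ Finset.range (n+1), ∑ u₁ ∈ Finset.range (n+1), ∑ u₂ ∈ Finset.range (n+1),
      if a = k ∧ b = u₁ ∧ c = u₂ then X k u₁ u₂ else 0) = X a b c := by
  have h3 : ∀ k u₁, (∑ u₂ ∈ Finset.range (n+1),
      if a = k ∧ b = u₁ ∧ c = u₂ then X k u₁ u₂ else 0)
      = if a = k ∧ b = u₁ then X k u₁ c else 0 := by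
    intro k u₁
    have he : ∀ u₂, (if a = k ∧ b = u₁ ∧ c = u₂ then X k u₁ u₂ else 0)
        = if c = u₂ then (if a = k ∧ b = u₁ then X k u₁ u₂ else 0) else 0 := by
      intro u₂
      by_cases h1 : c = u₂ <;> by_cases h2 : a = k ∧ b = u₁ <;>
        simp [h1, h2] <;> tauto
    rw [Finset.sum_congr rfl fun u₂ _ => he u₂,
      Finset.sum_ite_eq _ c (fun u₂ => if a = k ∧ b = u₁ then X k u₁ u₂ else 0),
      if_pos (Finset.mem_range.2 (Nat.lt_succ_of_le hc))]
  have h2 : ∀ k, (∑ u₁ ∈ Finset.range (n+1), if a = k ∧ b = u₁ then X k u₁ c else 0)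
      = if a = k then X k b c else 0 := by
    intro k
    have he : ∀ u₁, (if a = k ∧ b = u₁ then X k u₁ c else 0)
        = if b = u₁ then (if a = k then X k u₁ c else 0) else 0 := by
      intro u₁
      by_cases hh1 : b = u₁ <;> by_cases hh2 : a = k <;> simp [hh1, hh2]
    rw [Finset.sum_congr rfl fun u₁ _ => he u₁,
      Finset.sum_ite_eq _ b (fun u₁ => if a = k then X k u₁ c else 0),
      if_pos (Finset.mem_range.2 (Nat.lt_succ_of_le hb))]
  rw [Finset.sum_congr rfl fun k _ => Finset.sum_congr rfl fun u₁ _ => h3 k u₁]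
  rw [Finset.sum_congr rfl fun k _ => h2 k]
  rw [Finset.sum_ite_eq _ a (fun k => X k b c),
    if_pos (Finset.mem_range.2 (Nat.lt_succ_of_le ha))]

lemma group (T : Finset U → Finset U → ℝ) (X : ℕ → ℕ → ℕ → ℝ) :
    ∑ V : Finset U, ∑ W : Finset U, T V W * X (V ∩ W).card (V \ W).card (W \ V).card
      = ∑ k ∈ Finset.range (Fintype.card U + 1), ∑ u₁ ∈ Finset.range (Fintype.card U + 1),
          ∑ u₂ ∈ Finset.range (Fintype.card U + 1),
          (∑ V : Finset U, ∑ W : Finset U,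
            if (V ∩ W).card = k ∧ (V \ W).card = u₁ ∧ (W \ V).card = u₂ then T V W else 0)
            * X k u₁ u₂ := by
  have cardle : ∀ s : Finset U, s.card ≤ Fintype.card U := fun s => by
    simpa using Finset.card_le_univ s
  have hR : ∀ k u₁ u₂, (∑ V : Finset U, ∑ W : Finset U,
      if (V ∩ W).card = k ∧ (V \ W).card = u₁ ∧ (W \ V).card = u₂ then T V W else 0)
        * X k u₁ u₂
      = ∑ V : Finset U, ∑ W : Finset U,
          if (V ∩ W).card = k ∧ (V \ W).card = u₁ ∧ (W \ V).card = u₂ then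
            T V W * X k u₁ u₂ else 0 := by
    intro k u₁ u₂
    rw [Finset.sum_mul]
    refine Finset.sum_congr rfl fun V _ => ?_
    rw [Finset.sum_mul]
    refine Finset.sum_congr rfl fun W _ => ?_
    rw [ite_mul, zero_mul]
  rw [Finset.sum_congr rfl fun k _ => Finset.sum_congr rfl fun u₁ _ =>
    Finset.sum_congr rfl fun u₂ _ => hR k u₁ u₂]
  rw [swap32]
  refine Finset.sum_congr rfl fun V _ => Finset.sum_congr rfl fun W _ => ?_
  exact (select (Fintype.card U) _ _ _ (cardle _) (cardle _) (cardle _)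
    (fun k u₁ u₂ => T V W * X k u₁ u₂)).symm

end Main

/-- Averaging over random permutations:
`E_σ[(f ⬝ σ(g))²] = ∑_{k,u₁,u₂ : k+u₁+u₂ ≤ n} (k! u₁! u₂! (n-k-u₁-u₂)!/n!)
  s_{k,u₁,u₂}(f,f) s_{k,u₁,u₂}(g,g)` where `σ(g)(C) = g(σ⁻¹(C))` and `n = |U|`. -/
theorem stmt19 {U : Type*} [Fintype U] [DecidableEq U] (f g : Finset U → ℝ) :
    (Fintype.card (Equiv.Perm U) : ℝ)⁻¹ *
        ∑ σ : Equiv.Perm U, (ip f (fun C => g (C.image (⇑σ⁻¹)))) ^ 2 =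
      ∑ k ∈ Finset.range (Fintype.card U + 1),
        ∑ u₁ ∈ Finset.range (Fintype.card U + 1),
          ∑ u₂ ∈ Finset.range (Fintype.card U + 1),
            if k + u₁ + u₂ ≤ Fintype.card U then
              ((k.factorial * u₁.factorial * u₂.factorial *
                  (Fintype.card U - k - u₁ - u₂).factorial : ℕ) : ℝ) /
                  ((Fintype.card U).factorial : ℕ) *
                sK f f k u₁ u₂ * sK g g k u₁ u₂
            else 0 := by
  classical
  have hexp : ∀ σ : Equiv.Perm U, (ip f fun C => g (C.image ⇑σ⁻¹)) ^ 2
      = ∑ V : Finset U, ∑ W : Finset U,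
          (hatC f V * hatC f W) * (hatC g (V.image ⇑σ⁻¹) * hatC g (W.image ⇑σ⁻¹)) := by
    intro σ
    have h1 : (ip f fun C => g (C.image ⇑σ⁻¹))
        = ∑ V : Finset U, hatC f V * hatC g (V.image ⇑σ⁻¹) := by
      rw [parseval]
      exact Finset.sum_congr rfl fun V _ => by rw [hatC_perm]
    rw [h1, sq, Finset.sum_mul_sum]
    exact Finset.sum_congr rfl fun V _ => Finset.sum_congr rfl fun W _ => by ring
  rw [Finset.sum_congr rfl fun σ _ => hexp σ]
  rw [Finset.sum_comm]
  have hswap : ∀ V : Finset U, (∑ σ : Equiv.Perm U, ∑ W : Finset U,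
      (hatC f V * hatC f W) * (hatC g (V.image ⇑σ⁻¹) * hatC g (W.image ⇑σ⁻¹)))
      = ∑ W : Finset U, (hatC f V * hatC f W) *
          ∑ σ : Equiv.Perm U, hatC g (V.image ⇑σ⁻¹) * hatC g (W.image ⇑σ⁻¹) := by
    intro V
    rw [Finset.sum_comm]
    exact Finset.sum_congr rfl fun W _ => by rw [← Finset.mul_sum]
  rw [Finset.sum_congr rfl fun V _ => hswap V]
  have hps : ∀ V W : Finset U,
      (∑ σ : Equiv.Perm U, hatC g (V.image ⇑σ⁻¹) * hatC g (W.image ⇑σ⁻¹))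
      = ((Nat.factorial ((V ∩ W).card) * Nat.factorial ((V \ W).card) *
          Nat.factorial ((W \ V).card) *
          Nat.factorial (Fintype.card U - (V ∩ W).card - (V \ W).card - (W \ V).card) : ℕ) : ℝ) *
        ∑ V' : Finset U, ∑ W' : Finset U,
          if (V' ∩ W').card = (V ∩ W).card ∧ (V' \ W').card = (V \ W).card ∧
              (W' \ V').card = (W \ V).card then hatC g V' * hatC g W' else 0 :=
    fun V W => perm_sum V W (fun V' W' => hatC g V' * hatC g W')
  rw [Finset.sum_congr rfl fun V _ => Finset.sum_congr rfl fun W _ => by rw [hps V W]]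
  have hgroup : ∑ V : Finset U, ∑ W : Finset U, (hatC f V * hatC f W) *
        (((Nat.factorial ((V ∩ W).card) * Nat.factorial ((V \ W).card) *
            Nat.factorial ((W \ V).card) *
            Nat.factorial (Fintype.card U - (V ∩ W).card - (V \ W).card - (W \ V).card) : ℕ) : ℝ) *
          ∑ V' : Finset U, ∑ W' : Finset U,
            if (V' ∩ W').card = (V ∩ W).card ∧ (V' \ W').card = (V \ W).card ∧
                (W' \ V').card = (W \ V).card then hatC g V' * hatC g W' else 0)
      = ∑ k ∈ Finset.range (Fintype.card U + 1), ∑ u₁ ∈ Finset.range (Fintype.card U + 1),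
          ∑ u₂ ∈ Finset.range (Fintype.card U + 1),
          (∑ V : Finset U, ∑ W : Finset U,
            if (V ∩ W).card = k ∧ (V \ W).card = u₁ ∧ (W \ V).card = u₂ then
              hatC f V * hatC f W else 0) *
          (((Nat.factorial k * Nat.factorial u₁ * Nat.factorial u₂ *
              Nat.factorial (Fintype.card U - k - u₁ - u₂) : ℕ) : ℝ) *
            ∑ V' : Finset U, ∑ W' : Finset U,
              if (V' ∩ W').card = k ∧ (V' \ W').card = u₁ ∧ (W' \ V').card = u₂ then
                hatC g V' * hatC g W' else 0) :=
    group (fun V W => hatC f V * hatC f W)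
      (fun k u₁ u₂ => ((Nat.factorial k * Nat.factorial u₁ * Nat.factorial u₂ *
          Nat.factorial (Fintype.card U - k - u₁ - u₂) : ℕ) : ℝ) *
        ∑ V' : Finset U, ∑ W' : Finset U,
          if (V' ∩ W').card = k ∧ (V' \ W').card = u₁ ∧ (W' \ V').card = u₂ then
            hatC g V' * hatC g W' else 0)
  rw [hgroup, Fintype.card_perm]
  rw [Finset.mul_sum]
  refine Finset.sum_congr rfl fun k _ => ?_
  rw [Finset.mul_sum]
  refine Finset.sum_congr rfl fun u₁ _ => ?_
  rw [Finset.mul_sum]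
  refine Finset.sum_congr rfl fun u₂ _ => ?_
  rw [sK_eq f f k u₁ u₂, sK_eq g g k u₁ u₂]
  by_cases hc : k + u₁ + u₂ ≤ Fintype.card U
  · rw [if_pos hc, div_eq_mul_inv]
    ring
  · rw [if_neg hc, sK_zero f f k u₁ u₂ hc]
    ring
end
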